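/- arXiv:1812.10219 — 5 statements merged into one kernel-verified Lean document; each statement's English description precedes it below -/
import Mathlib

section
/- Let (X,G) be a topological dynamical system on a compact metric space (X,d) with G locally compact σ-compact amenable. Define D(x,y) as the supremum over all left Følner sequences 𝓕 = (F_n) of limsup_{n→∞} (1/|F_n|) ∫_{F_n} d(tx,ty) dm(t). Then D is G-invariant: D(sx,sy) = D(x,y) for all x,y ∈ X and s ∈ G. -/
open MeasureTheory Filter Topology Pointwise

/-- A (left) Følner sequence: a sequence of non-empty compact subsets `F n` of `G` such that
`m (g • F n △ F n) / m (F n) → 0` for every `g ∈ G`. -/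
def IsFolner {G : Type*} [Group G] [TopologicalSpace G] [MeasurableSpace G]
    (m : Measure G) (F : ℕ → Set G) : Prop :=
  (∀ n, IsCompact (F n)) ∧ (∀ n, (F n).Nonempty) ∧
    ∀ g : G, Tendsto (fun n => m (symmDiff (g • F n) (F n)) / m (F n)) atTop (𝓝 0)

/-- Amenability of `G` (with Haar measure `m`), expressed by the existence of a left Følner
sequence. -/
def AmenableGroup {G : Type*} [Group G] [TopologicalSpace G] [MeasurableSpace G]
    (m : Measure G) : Prop :=
  ∃ F : ℕ → Set G, IsFolner m F

/-- The Besicovitch pseudometric `D_𝓕` associated to a Følner sequence `F`. -/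
noncomputable def besicovitchD {G : Type*} [Group G] [MeasurableSpace G] {X : Type*}
    [SMul G X] [PseudoMetricSpace X] (m : Measure G) (F : ℕ → Set G) (x y : X) : ℝ :=
  limsup (fun n => (∫ t in F n, dist (t • x) (t • y) ∂m) / (m (F n)).toReal) atTop

/-- The Weyl pseudometric `D`, the supremum of `D_𝓕` over all left Følner sequences `𝓕`. -/
noncomputable def weylD {G : Type*} [Group G] [TopologicalSpace G] [MeasurableSpace G]
    {X : Type*} [SMul G X] [PseudoMetricSpace X] (m : Measure G) (x y : X) : ℝ :=
  sSup {r | ∃ F : ℕ → Set G, IsFolner m F ∧ r = besicovitchD m F x y}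

/-- (Weyl-)mean equicontinuity of the action of `G` on `X`. -/
def MeanEquicontinuous {G : Type*} [Group G] [TopologicalSpace G] [MeasurableSpace G]
    (X : Type*) [SMul G X] [PseudoMetricSpace X] (m : Measure G) : Prop :=
  ∀ ε > 0, ∃ δ > 0, ∀ x y : X, dist x y < δ → weylD m x y < ε

/-- Besicovitch-`𝓕`-mean equicontinuity with respect to the Følner sequence `F`. -/
def FMeanEquicontinuous {G : Type*} [Group G] [MeasurableSpace G]
    (X : Type*) [SMul G X] [PseudoMetricSpace X] (m : Measure G) (F : ℕ → Set G) : Prop :=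
  ∀ ε > 0, ∃ δ > 0, ∀ x y : X, dist x y < δ → besicovitchD m F x y < ε

/-- The pseudometric `D_f` associated to a function `f : X → ℂ`. -/
noncomputable def besicovitchDf {G : Type*} [Group G] [MeasurableSpace G] {X : Type*}
    [SMul G X] (m : Measure G) (F : ℕ → Set G) (f : X → ℂ) (x y : X) : ℝ :=
  limsup (fun n => (∫ t in F n, ‖f (t • x) - f (t • y)‖ ∂m) / (m (F n)).toReal)
    atTop

/-- The Weyl version of `D_f`: supremum over all Følner sequences. -/
noncomputable def weylDf {G : Type*} [Group G] [TopologicalSpace G] [MeasurableSpace G]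
    {X : Type*} [SMul G X] (m : Measure G) (f : X → ℂ) (x y : X) : ℝ :=
  sSup {r | ∃ F : ℕ → Set G, IsFolner m F ∧ r = besicovitchDf m F f x y}

/-- A measure `μ` on `X` is invariant under the action of `G`. -/
def IsInvariantMeasure (G : Type*) [Group G] {X : Type*} [MulAction G X]
    [MeasurableSpace X] (μ : Measure X) : Prop :=
  ∀ g : G, MeasurePreserving (fun x : X => g • x) μ μ

/-- A measure `μ` on `X` is invariant and ergodic under the action of `G`. -/
def IsErgodicMeasure (G : Type*) [Group G] {X : Type*} [MulAction G X]
    [MeasurableSpace X] (μ : Measure X) : Prop :=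
  IsInvariantMeasure G μ ∧
    ∀ A : Set X, MeasurableSet A →
      (∀ g : G, μ (symmDiff A ((fun x : X => g • x) ⁻¹' A)) = 0) → μ A = 0 ∨ μ A = 1

/-- A (topological) factor map: a continuous equivariant surjection. -/
def IsFactorMap (G : Type*) [Group G] {X Y : Type*} [TopologicalSpace X]
    [TopologicalSpace Y] [MulAction G X] [MulAction G Y] (h : X → Y) : Prop :=
  Continuous h ∧ Function.Surjective h ∧ ∀ (g : G) (x : X), h (g • x) = g • h x

/-- `h` is an isomorphism mod 0 with respect to `μ` and `ν`: `h` pushes `μ` to `ν` and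
restricts to a bi-measurable bijection between full measure sets. -/
def IsIsoMod0 {X Y : Type*} [MeasurableSpace X] [MeasurableSpace Y]
    (h : X → Y) (μ : Measure X) (ν : Measure Y) : Prop :=
  Measurable h ∧ Measure.map h μ = ν ∧
    ∃ (M : Set X) (N : Set Y) (g : Y → X), MeasurableSet M ∧ MeasurableSet N ∧
      μ M = 1 ∧ ν N = 1 ∧ Measurable g ∧ Set.BijOn h M N ∧
      (∀ x ∈ M, g (h x) = x) ∧ (∀ y ∈ N, h (g y) = y)

/-- A topo-isomorphy: a factor map which is an isomorphism mod 0 with respect to every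
`G`-invariant probability measure and its push-forward. -/
def IsTopoIsomorphy (G : Type*) [Group G] {X Y : Type*} [TopologicalSpace X]
    [TopologicalSpace Y] [MeasurableSpace X] [MeasurableSpace Y] [MulAction G X]
    [MulAction G Y] (h : X → Y) : Prop :=
  IsFactorMap G h ∧
    ∀ μ : Measure X, IsProbabilityMeasure μ → IsInvariantMeasure G μ →
      IsIsoMod0 h μ (Measure.map h μ)

/-- The action of `G` on `X` is equicontinuous. -/
def EquicontinuousAction (G : Type*) [Group G] (X : Type*) [SMul G X]
    [PseudoMetricSpace X] : Prop :=
  ∀ ε > 0, ∃ δ > 0, ∀ x y : X, dist x y < δ → ∀ g : G, dist (g • x) (g • y) < ε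

/-- `A` is a minimal set: non-empty, closed, invariant, and every orbit is dense in `A`. -/
def IsMinimalSet (G : Type*) [Group G] {X : Type*} [TopologicalSpace X] [MulAction G X]
    (A : Set X) : Prop :=
  A.Nonempty ∧ IsClosed A ∧ (∀ g : G, g • A = A) ∧
    ∀ x ∈ A, closure (MulAction.orbit G x) = A

/-- `A` is a transitive set: non-empty, closed, invariant, containing a point with dense
orbit in `A`. -/
def IsTransitiveSet (G : Type*) [Group G] {X : Type*} [TopologicalSpace X] [MulAction G X]
    (A : Set X) : Prop :=
  A.Nonempty ∧ IsClosed A ∧ (∀ g : G, g • A = A) ∧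
    ∃ x ∈ A, closure (MulAction.orbit G x) = A

/-- `A` carries exactly one `G`-invariant Borel probability measure. -/
def UniquelyErgodicOn (G : Type*) [Group G] {X : Type*} [MulAction G X]
    [MeasurableSpace X] (A : Set X) : Prop :=
  ∃! μ : Measure X, IsProbabilityMeasure μ ∧ IsInvariantMeasure G μ ∧ μ A = 1

/-- The (topological) support of a measure. -/
def measSupport {X : Type*} [TopologicalSpace X] [MeasurableSpace X]
    (μ : Measure X) : Set X :=
  {x | ∀ U : Set X, IsOpen U → x ∈ U → 0 < μ U}


section Aux

open MeasureTheory Measure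

variable {G : Type*} [Group G] [TopologicalSpace G] [IsTopologicalGroup G]
  [LocallyCompactSpace G] [MeasurableSpace G] [BorelSpace G]

/-- Subsets of compact sets have compact closure (in an R₁ space such as a
topological group). -/
lemma isCompact_closure_of_subset_compact' {B K : Set G} (hK : IsCompact K) (h : B ⊆ K) :
    IsCompact (closure B) :=
  hK.closure.of_isClosed_subset isClosed_closure (closure_mono h)

lemma map_mul_right_apply' (m : Measure G) (s : G) (S : Set G) :
    Measure.map (· * s) m S = m ((fun t : G => t * s) ⁻¹' S) :=
  MeasurableEquiv.map_apply (MeasurableEquiv.mulRight s) S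

/-- The push-forward of a Haar measure under right multiplication agrees with the original
measure, up to a positive scalar, on all sets with compact closure. -/
lemma map_mul_right_haar_eq_smul (m : Measure G) [m.IsHaarMeasure] (s : G) :
    ∃ c : NNReal, 0 < c ∧ ∀ S : Set G, IsCompact (closure S) →
      Measure.map (· * s) m S = (c : ENNReal) * m S := by
  haveI h1 : IsMulLeftInvariant (Measure.map (· * s) m) := by infer_instance
  haveI h2 : IsFiniteMeasureOnCompacts (Measure.map (· * s) m) := by
    constructor
    intro K hK
    rw [map_mul_right_apply']
    have hpre : (fun t : G => t * s) ⁻¹' K = (· * s⁻¹) '' K := by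
      ext t
      simp only [Set.mem_preimage, Set.mem_image]
      constructor
      · intro h
        exact ⟨t * s, h, by simp⟩
      · rintro ⟨u, hu, rfl⟩
        simpa using hu
    rw [hpre]
    exact measure_lt_top_of_subset (subset_refl _)
      (hK.image (continuous_mul_right s⁻¹)).measure_lt_top.ne
  haveI h3 : IsOpenPosMeasure (Measure.map (· * s) m) := by
    constructor
    intro U hU hne
    rw [map_mul_right_apply']
    apply (hU.preimage (continuous_mul_right s)).measure_ne_zero m
    obtain ⟨u, hu⟩ := hne
    exact ⟨u * s⁻¹, by simpa using hu⟩
  haveI h4 : (Measure.map (· * s) m).IsHaarMeasure := ⟨⟩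
  refine ⟨haarScalarFactor (Measure.map (· * s) m) m,
    haarScalarFactor_pos_of_isHaarMeasure _ m, fun S hS => ?_⟩
  have := measure_isMulInvariant_eq_smul_of_isCompact_closure
    (Measure.map (· * s) m) m hS
  rw [this, ENNReal.smul_def, smul_eq_mul]

/-- For a Haar measure `m`, a set `B` with compact closure satisfies
`m B = c * m (B * s)` where `c` is the scalar from `map_mul_right_haar_eq_smul`. -/
lemma haar_measure_image_mul_right (m : Measure G) [m.IsHaarMeasure] (s : G)
    {c : NNReal}
    (hc : ∀ S : Set G, IsCompact (closure S) →
      Measure.map (· * s) m S = (c : ENNReal) * m S)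
    {B : Set G} (hB : IsCompact (closure B)) :
    m B = (c : ENNReal) * m ((· * s) '' B) := by
  have hinj : Function.Injective fun t : G => t * s := mul_left_injective s
  have himg : IsCompact (closure ((· * s) '' B)) :=
    isCompact_closure_of_subset_compact' (hB.image (continuous_mul_right s))
      (Set.image_mono subset_closure)
  have h1 : Measure.map (· * s) m ((· * s) '' B) = m B := by
    rw [map_mul_right_apply', Set.preimage_image_eq B hinj]
  rw [← h1, hc _ himg]

/-- Right translates of a Følner sequence are Følner. -/
lemma isFolner_image_mul_right (m : Measure G) [m.IsHaarMeasure] (s : G)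
    {F : ℕ → Set G} (hF : IsFolner m F) :
    IsFolner m (fun n => (· * s) '' F n) := by
  obtain ⟨c, hc0, hc⟩ := map_mul_right_haar_eq_smul m s
  have hinj : Function.Injective fun t : G => t * s := mul_left_injective s
  refine ⟨fun n => (hF.1 n).image (continuous_mul_right s),
    fun n => (hF.2.1 n).image _, fun g => ?_⟩
  refine (hF.2.2 g).congr fun n => ?_
  have hA : IsCompact (F n) := hF.1 n
  have hgA : IsCompact ((g * ·) '' F n) := hA.image (continuous_mul_left g)
  have hsmul : g • F n = (g * ·) '' F n := rfl
  have hsd_cl : IsCompact (closure (symmDiff (g • F n) (F n))) := by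
    apply isCompact_closure_of_subset_compact' (hgA.union hA)
    rw [hsmul]
    exact symmDiff_le_sup
  have key1 : m (symmDiff (g • F n) (F n)) =
      (c : ENNReal) * m ((· * s) '' symmDiff (g • F n) (F n)) :=
    haar_measure_image_mul_right m s hc hsd_cl
  have key2 : m (F n) = (c : ENNReal) * m ((· * s) '' F n) :=
    haar_measure_image_mul_right m s hc hA.closure
  have himg_smul : g • ((· * s) '' F n) = (· * s) '' (g • F n) := by
    rw [hsmul]
    show (g * ·) '' ((· * s) '' F n) = _
    rw [Set.image_image, Set.image_image]
    simp [mul_assoc]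
  have himg_sd : symmDiff (g • ((· * s) '' F n)) ((· * s) '' F n) =
      (· * s) '' symmDiff (g • F n) (F n) := by
    rw [himg_smul, Set.image_symmDiff hinj]
  rw [himg_sd, ← ENNReal.mul_div_mul_left
      (m ((· * s) '' symmDiff (g • F n) (F n))) (m ((· * s) '' F n))
      (by exact_mod_cast hc0.ne' : (c : ENNReal) ≠ 0) ENNReal.coe_ne_top,
    ← key1, ← key2]

/-- The Besicovitch pseudometric transforms under right translation of the Følner
sequence. -/
lemma besicovitchD_image_mul_right (m : Measure G) [m.IsHaarMeasure] (s : G)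
    {F : ℕ → Set G} (hFc : ∀ n, IsCompact (F n))
    {X : Type*} [MetricSpace X] [MulAction G X] [ContinuousSMul G X] (x y : X) :
    besicovitchD m F (s • x) (s • y) =
      besicovitchD m (fun n => (· * s) '' F n) x y := by
  obtain ⟨c, hc0, hc⟩ := map_mul_right_haar_eq_smul m s
  have hinj : Function.Injective fun t : G => t * s := mul_left_injective s
  have hdist : Continuous fun t : G => dist (t • x) (t • y) :=
    Continuous.dist (continuous_id.smul continuous_const)
      (continuous_id.smul continuous_const)
  unfold besicovitchD
  congr 1
  funext n
  have hA : IsCompact (F n) := hFc n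
  have hAim : IsCompact ((· * s) '' F n) := hA.image (continuous_mul_right s)
  have hres2 : (Measure.map (· * s) m).restrict ((· * s) '' F n) =
      (c : ENNReal) • m.restrict ((· * s) '' F n) := by
    ext B hB
    rw [Measure.restrict_apply hB, Measure.smul_apply, Measure.restrict_apply hB,
      smul_eq_mul]
    exact hc _ (isCompact_closure_of_subset_compact' hAim Set.inter_subset_right)
  have hint2 : (∫ t in F n, dist (t • (s • x)) (t • (s • y)) ∂m) =
      (c : ENNReal).toReal * ∫ u in (· * s) '' F n, dist (u • x) (u • y) ∂m := by
    have e1 : (∫ u in (· * s) '' F n, dist (u • x) (u • y)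
          ∂(Measure.map (· * s) m)) =
        ∫ t in F n, dist (t • (s • x)) (t • (s • y)) ∂m := by
      have : (Measure.map (· * s) m).restrict ((· * s) '' F n) =
          Measure.map (MeasurableEquiv.mulRight s)
            (m.restrict (MeasurableEquiv.mulRight s ⁻¹' ((· * s) '' F n))) :=
        MeasurableEquiv.restrict_map (MeasurableEquiv.mulRight s) m _
      rw [this, MeasureTheory.integral_map_equiv]
      have hpre : (MeasurableEquiv.mulRight s) ⁻¹' ((· * s) '' F n) = F n :=
        Set.preimage_image_eq (F n) hinj
      rw [hpre]
      simp only [MeasurableEquiv.coe_mulRight, mul_smul]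
    rw [← e1]
    have e2 : (∫ u in (· * s) '' F n, dist (u • x) (u • y)
          ∂(Measure.map (· * s) m)) =
        ∫ u, dist (u • x) (u • y) ∂((c : ENNReal) • m.restrict ((· * s) '' F n)) := by
      rw [← hres2]
    rw [e2, integral_smul_measure, smul_eq_mul]
  have hmeas : (m (F n)).toReal =
      (c : ENNReal).toReal * (m ((· * s) '' F n)).toReal := by
    rw [haar_measure_image_mul_right m s hc hA.closure, ENNReal.toReal_mul]
  rw [hint2, hmeas,
    mul_div_mul_left _ _
      (by rw [ENNReal.coe_toReal]; exact_mod_cast hc0.ne' : ((c : ENNReal)).toReal ≠ 0)]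

end Aux

/-- The Weyl pseudometric `D` is `G`-invariant. -/
theorem weylD_smul_invariant {G : Type*} [Group G] [TopologicalSpace G]
    [IsTopologicalGroup G] [LocallyCompactSpace G] [SigmaCompactSpace G] [MeasurableSpace G]
    [BorelSpace G] (m : Measure G) [m.IsHaarMeasure] (hG : AmenableGroup m)
    {X : Type*} [MetricSpace X] [CompactSpace X] [MulAction G X] [ContinuousSMul G X]
    (s : G) (x y : X) :
    weylD m (s • x) (s • y) = weylD m x y := by
  unfold weylD
  congr 1
  ext r
  constructor
  · rintro ⟨F, hF, rfl⟩
    exact ⟨fun n => (· * s) '' F n, isFolner_image_mul_right m s hF,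
      besicovitchD_image_mul_right m s hF.1 x y⟩
  · rintro ⟨F, hF, rfl⟩
    refine ⟨fun n => (· * s⁻¹) '' F n, isFolner_image_mul_right m s⁻¹ hF, ?_⟩
    have h := besicovitchD_image_mul_right m s⁻¹ hF.1 (s • x) (s • y)
    rw [inv_smul_smul, inv_smul_smul] at h
    exact h
end

section
/- Let X and Y be compact metric spaces, μ a Borel probability measure on X, and h : X → Y a Borel measurable map. If the composition operator U : L²(Y, h(μ)) → L²(X, μ), f ↦ f ∘ h, is a unitary operator, then h is an isomorphism mod 0 with respect to μ and the push-forward measure h(μ); that is, there exist Borel sets M ⊆ X and N ⊆ Y with μ(M) = h(μ)(N) = 1 and a bi-measurable measure-preserving bijection from M to N which agrees with h on M. -/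
open MeasureTheory Filter Topology Pointwise

/-- If the composition operator `f ↦ f ∘ h` is a unitary operator from
`L²(Y, h(μ))` to `L²(X, μ)`, then `h` is an isomorphism mod 0 with respect to `μ` and
`h(μ)`. -/
theorem isoMod0_of_unitary_comp {X Y : Type*} [MetricSpace X] [CompactSpace X]
    [MeasurableSpace X] [BorelSpace X] [MetricSpace Y] [CompactSpace Y]
    [MeasurableSpace Y] [BorelSpace Y] (μ : Measure X) [IsProbabilityMeasure μ]
    (h : X → Y) (hmeas : Measurable h)
    (U : Lp ℂ 2 (Measure.map h μ) ≃ₗᵢ[ℂ] Lp ℂ 2 μ)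
    (hU : ∀ f : Lp ℂ 2 (Measure.map h μ), (U f : X → ℂ) =ᵐ[μ] fun x => (f : Y → ℂ) (h x)) :
    IsIsoMod0 h μ (Measure.map h μ) := by
  have hXne : Nonempty X := by
    by_contra hne
    rw [not_nonempty_iff] at hne
    have := measure_univ (μ := μ)
    simp [Set.univ_eq_empty_iff.2 hne] at this
  -- Step 1: every Borel set in X is, mod μ, a preimage of a Borel set in Y.
  have key : ∀ A : Set X, MeasurableSet A →
      ∃ B : Set Y, MeasurableSet B ∧ μ (symmDiff A (h ⁻¹' B)) = 0 := by
    intro A hA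
    set F : Lp ℂ 2 μ := indicatorConstLp 2 hA (measure_ne_top μ A) (1 : ℂ) with hF
    set G : Lp ℂ 2 (Measure.map h μ) := U.symm F with hG
    have hUG : (U G : X → ℂ) =ᵐ[μ] fun x => (G : Y → ℂ) (h x) := hU G
    have hUGF : U G = F := U.apply_symm_apply F
    have hFind : (F : X → ℂ) =ᵐ[μ] A.indicator fun _ => (1 : ℂ) :=
      indicatorConstLp_coeFn
    have hae : ∀ᵐ x ∂μ, A.indicator (fun _ => (1 : ℂ)) x = (G : Y → ℂ) (h x) := by
      filter_upwards [hUG, hFind] with x h1 h2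
      rw [← h2, ← h1, hUGF]
    refine ⟨(G : Y → ℂ) ⁻¹' {1}, (Lp.stronglyMeasurable G).measurable (measurableSet_singleton _), ?_⟩
    have : ∀ᵐ x ∂μ, x ∉ symmDiff A (h ⁻¹' ((G : Y → ℂ) ⁻¹' {1})) := by
      filter_upwards [hae] with x hx
      intro hmem
      rcases hmem with ⟨hx1, hx2⟩ | ⟨hx1, hx2⟩
      · apply hx2
        simp only [Set.mem_preimage, Set.mem_singleton_iff, ← hx]
        simp [Set.indicator_of_mem hx1]
      · apply hx2
        have : (G : Y → ℂ) (h x) = 1 := hx1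
        rw [← hx] at this
        by_contra hxA
        simp [Set.indicator_of_notMem hxA] at this
    exact measure_eq_zero_iff_ae_notMem.2 this
  -- choice of B for each set
  have key' : ∀ A : Set X, ∃ B : Set Y,
      MeasurableSet A → MeasurableSet B ∧ μ (symmDiff A (h ⁻¹' B)) = 0 := by
    intro A
    by_cases hA : MeasurableSet A
    · obtain ⟨B, hB⟩ := key A hA
      exact ⟨B, fun _ => hB⟩
    · exact ⟨∅, fun hA' => absurd hA' hA⟩
  choose B hB using key'
  -- Step 2: countable basis and the full measure set where h separates points
  set 𝒰 := TopologicalSpace.countableBasis X with h𝒰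
  have h𝒰c : 𝒰.Countable := TopologicalSpace.countable_countableBasis X
  have h𝒰b := TopologicalSpace.isBasis_countableBasis X
  have hopen : ∀ V ∈ 𝒰, MeasurableSet V := fun V hV =>
    (TopologicalSpace.isOpen_of_mem_countableBasis hV).measurableSet
  set bad : Set X := ⋃ V ∈ 𝒰, symmDiff V (h ⁻¹' B V) with hbad
  have hbadmeas : MeasurableSet bad :=
    MeasurableSet.biUnion h𝒰c fun V hV =>
      (hopen V hV).symmDiff (hmeas ((hB V (hopen V hV)).1))
  have hbadnull : μ bad = 0 :=
    (measure_biUnion_null_iff h𝒰c).2 fun V hV => (hB V (hopen V hV)).2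
  set M : Set X := badᶜ with hM
  have hMmeas : MeasurableSet M := hbadmeas.compl
  have hMfull : μ M = 1 := by
    rw [hM, measure_compl hbadmeas (measure_ne_top _ _), hbadnull, measure_univ]
    simp
  -- h is injective on M
  have hinj : Set.InjOn h M := by
    intro x hx x' hx' hxy
    by_contra hne
    obtain ⟨V, hV𝒰, hxV, hVsub⟩ :=
      h𝒰b.exists_subset_of_mem_open (by simpa using hne : x ∈ ({x'}ᶜ : Set X))
        isClosed_singleton.isOpen_compl
    have hxB : h x ∈ B V := by
      by_contra hc
      exact hx (Set.mem_biUnion hV𝒰 (Or.inl ⟨hxV, hc⟩))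
    have hx'B : h x' ∉ B V := by
      intro hc
      exact hx' (Set.mem_biUnion hV𝒰 (Or.inr ⟨hc, fun hc' => hVsub hc' rfl⟩))
    rw [hxy] at hxB
    exact hx'B hxB
  -- Step 3: image set N
  set N : Set Y := h '' M with hN
  have hNmeas : MeasurableSet N := hMmeas.image_of_measurable_injOn hmeas hinj
  have hNfull : Measure.map h μ N = 1 := by
    rw [Measure.map_apply hmeas hNmeas]
    refine le_antisymm ?_ ?_
    · haveI : IsProbabilityMeasure (Measure.map h μ) :=
        Measure.isProbabilityMeasure_map hmeas.aemeasurable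
      rw [← Measure.map_apply hmeas hNmeas]
      exact prob_le_one
    · rw [← hMfull]
      exact measure_mono (Set.subset_preimage_image h M)
  -- Step 4: the inverse map g
  classical
  set g : Y → X := fun y => if hy : ∃ x ∈ M, h x = y then hy.choose else Classical.arbitrary X
    with hg
  have hgh : ∀ x ∈ M, g (h x) = x := by
    intro x hx
    have hy : ∃ x' ∈ M, h x' = h x := ⟨x, hx, rfl⟩
    rw [hg]
    simp only [dif_pos hy]
    exact hinj hy.choose_spec.1 hx hy.choose_spec.2
  have hhg : ∀ y ∈ N, h (g y) = y := by
    rintro y ⟨x, hx, rfl⟩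
    rw [hgh x hx]
  have hgM : ∀ y ∈ N, g y ∈ M := by
    rintro y ⟨x, hx, rfl⟩
    rw [hgh x hx]; exact hx
  have hgmeas : Measurable g := by
    intro A hA
    have hsplit : g ⁻¹' A = (h '' (A ∩ M)) ∪ ((g ⁻¹' A) ∩ Nᶜ) := by
      ext y
      constructor
      · intro hy
        by_cases hyN : y ∈ N
        · exact Or.inl ⟨g y, ⟨hy, hgM y hyN⟩, hhg y hyN⟩
        · exact Or.inr ⟨hy, hyN⟩
      · rintro (⟨x, ⟨hxA, hxM⟩, rfl⟩ | ⟨hy, _⟩)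
        · show g (h x) ∈ A
          rw [hgh x hxM]; exact hxA
        · exact hy
    rw [hsplit]
    refine MeasurableSet.union ((hA.inter hMmeas).image_of_measurable_injOn hmeas
      (hinj.mono Set.inter_subset_right)) ?_
    by_cases hx0 : Classical.arbitrary X ∈ A
    · have : (g ⁻¹' A) ∩ Nᶜ = Nᶜ := by
        apply Set.inter_eq_right.2
        intro y hy
        show g y ∈ A
        rw [hg]
        have : ¬ ∃ x ∈ M, h x = y := by
          rintro ⟨x, hxM, rfl⟩
          exact hy ⟨x, hxM, rfl⟩
        simpa [dif_neg this] using hx0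
      rw [this]; exact hNmeas.compl
    · have : (g ⁻¹' A) ∩ Nᶜ = ∅ := by
        ext y
        simp only [Set.mem_inter_iff, Set.mem_empty_iff_false, iff_false, not_and]
        intro hy hyN
        apply hx0
        have hne : ¬ ∃ x ∈ M, h x = y := by
          rintro ⟨x, hxM, rfl⟩
          exact hyN ⟨x, hxM, rfl⟩
        have := hy
        rw [hg] at this
        simpa [dif_neg hne] using this
      rw [this]; exact MeasurableSet.empty
  exact ⟨hmeas, rfl, M, N, g, hMmeas, hNmeas, hMfull, hNfull, hgmeas,
    hinj.bijOn_image, hgh, hhg⟩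
end

section
/- Suppose (X,G) is a topo-isomorphic extension of (Y,G) via the factor map h : X → Y. If μ₁ and μ₂ are two distinct ergodic G-invariant measures on X, then the push-forward measures h(μ₁) and h(μ₂) are distinct. -/
open MeasureTheory Filter Topology Pointwise

/-- A topo-isomorphy maps distinct ergodic invariant measures to distinct
push-forward measures. -/
theorem topoIsomorphy_injective_on_ergodic {G : Type*} [Group G] [TopologicalSpace G]
    [IsTopologicalGroup G] [LocallyCompactSpace G] [SigmaCompactSpace G]
    {X Y : Type*} [MetricSpace X] [CompactSpace X] [MulAction G X] [ContinuousSMul G X]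
    [MeasurableSpace X] [BorelSpace X] [MetricSpace Y] [CompactSpace Y] [MulAction G Y]
    [ContinuousSMul G Y] [MeasurableSpace Y] [BorelSpace Y]
    (h : X → Y) (hh : IsTopoIsomorphy G h)
    (μ₁ μ₂ : Measure X) [IsProbabilityMeasure μ₁] [IsProbabilityMeasure μ₂]
    (h₁ : IsErgodicMeasure G μ₁) (h₂ : IsErgodicMeasure G μ₂) (hne : μ₁ ≠ μ₂) :
    Measure.map h μ₁ ≠ Measure.map h μ₂ := by
  intro hmap
  apply hne
  obtain ⟨⟨hcont, hsurj, hequiv⟩, hiso⟩ := hh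
  have hmeas : Measurable h := hcont.measurable
  -- the average measure
  set μ : Measure X := (2 : ENNReal)⁻¹ • μ₁ + (2 : ENNReal)⁻¹ • μ₂ with hμdef
  have hprob : IsProbabilityMeasure μ := by
    constructor
    simp [hμdef, measure_univ]
    rw [ENNReal.inv_two_add_inv_two]
  have hinv : IsInvariantMeasure G μ := by
    intro g
    have hm : Measurable (fun x : X => g • x) := (continuous_const_smul g).measurable
    refine ⟨hm, ?_⟩
    rw [hμdef, Measure.map_add _ _ hm, Measure.map_smul, Measure.map_smul,
      (h₁.1 g).map_eq, (h₂.1 g).map_eq]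
  obtain ⟨_, _, M, N, g, hM, hN, hμM, hνN, hgmeas, hbij, hgh, hhg⟩ := hiso μ hprob hinv
  have hμMc : μ Mᶜ = 0 := by
    rw [measure_compl hM (measure_ne_top _ _), hμM, measure_univ, tsub_self]
  have hsum : (2 : ENNReal)⁻¹ * μ₁ Mᶜ + (2 : ENNReal)⁻¹ * μ₂ Mᶜ = 0 := by
    simpa [hμdef, Measure.add_apply, Measure.smul_apply, smul_eq_mul] using hμMc
  have hμ1Mc : μ₁ Mᶜ = 0 := by
    have h1 : (2 : ENNReal)⁻¹ * μ₁ Mᶜ = 0 := by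
      rcases add_eq_zero.mp hsum with ⟨ha, _⟩; exact ha
    simpa [mul_eq_zero] using h1
  have hμ2Mc : μ₂ Mᶜ = 0 := by
    have h1 : (2 : ENNReal)⁻¹ * μ₂ Mᶜ = 0 := by
      rcases add_eq_zero.mp hsum with ⟨_, hb⟩; exact hb
    simpa [mul_eq_zero] using h1
  -- key: for any measurable A, μᵢ A = (map h μᵢ) (g ⁻¹' A)
  have key : ∀ (ν : Measure X), IsProbabilityMeasure ν → ν Mᶜ = 0 →
      ∀ A : Set X, MeasurableSet A → ν A = (Measure.map h ν) (g ⁻¹' A) := by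
    intro ν _ hνMc A hA
    rw [Measure.map_apply hmeas (hgmeas hA)]
    have hsub1 : A ∩ M ⊆ h ⁻¹' (g ⁻¹' A) ∩ M := by
      rintro x ⟨hxA, hxM⟩
      exact ⟨by simpa [Set.mem_preimage, hgh x hxM] using hxA, hxM⟩
    have hsub2 : h ⁻¹' (g ⁻¹' A) ∩ M ⊆ A ∩ M := by
      rintro x ⟨hx, hxM⟩
      refine ⟨?_, hxM⟩
      have := hgh x hxM
      rwa [Set.mem_preimage, Set.mem_preimage, this] at hx
    have heq : A ∩ M = h ⁻¹' (g ⁻¹' A) ∩ M := le_antisymm hsub1 hsub2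
    calc ν A = ν (A ∩ M) := (measure_inter_conull hνMc).symm
      _ = ν (h ⁻¹' (g ⁻¹' A) ∩ M) := by rw [heq]
      _ = ν (h ⁻¹' (g ⁻¹' A)) := measure_inter_conull hνMc
  -- conclude
  ext A hA
  rw [key μ₁ inferInstance hμ1Mc A hA, key μ₂ inferInstance hμ2Mc A hA, hmap]
end

section
/- Assume (X,G) is a topo-isomorphic extension of an equicontinuous system (Y,G) with factor map h. If μ and ν are distinct ergodic G-invariant measures on X supported on transitive closed invariant sets A_μ and A_ν respectively, then h(A_μ) and h(A_ν) are disjoint. -/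
open MeasureTheory Filter Topology Pointwise

namespace TopoIsoAux
set_option linter.unusedSectionVars false

open MeasureTheory TopologicalSpace

variable {G : Type*} [Group G] [TopologicalSpace G] {Y : Type*} [MetricSpace Y] [CompactSpace Y]
  [MulAction G Y] [ContinuousSMul G Y]

/-- The action of `g` as a continuous self-map of `Y`. -/
def actCM (G : Type*) [Group G] [TopologicalSpace G] (Y : Type*) [MetricSpace Y]
    [MulAction G Y] [ContinuousSMul G Y] (g : G) : C(Y, Y) :=
  ⟨fun y => g • y, continuous_const_smul g⟩

lemma actCM_apply (g : G) (y : Y) : actCM G Y g y = g • y := rfl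

lemma actCM_mul (g h : G) : actCM G Y (g * h) = (actCM G Y g).comp (actCM G Y h) := by
  ext y
  simp [actCM_apply, mul_smul]

lemma actCM_one : actCM G Y (1 : G) = ContinuousMap.id Y := by
  ext y
  simp [actCM_apply]

/-- The "Ellis group": the closure, in `C(Y,Y)`, of the set of action maps. -/
def EE (G : Type*) [Group G] [TopologicalSpace G] (Y : Type*) [MetricSpace Y] [CompactSpace Y]
    [MulAction G Y] [ContinuousSMul G Y] : Set C(Y, Y) :=
  closure (Set.range (actCM G Y))

lemma mem_EE_self (g : G) : actCM G Y g ∈ EE G Y := subset_closure ⟨g, rfl⟩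

lemma id_mem_EE : ContinuousMap.id Y ∈ EE G Y := by
  rw [← actCM_one (G := G) (Y := Y)]
  exact mem_EE_self 1

lemma isCompact_EE (hY : EquicontinuousAction G Y) : IsCompact (EE G Y) := by
  choose δ δpos hδ using fun k : ℕ => hY (1 / ((k : ℝ) + 1)) (by positivity)
  set T : Set C(Y, Y) :=
    {f | ∀ (k : ℕ) (x y : Y), dist x y < δ k → dist (f x) (f y) ≤ 1 / ((k : ℝ) + 1)} with hT
  have hsetP : IsClosed {F : Y → Y |
      ∀ (k : ℕ) (x y : Y), dist x y < δ k → dist (F x) (F y) ≤ 1 / ((k : ℝ) + 1)} := by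
    have : {F : Y → Y | ∀ (k : ℕ) (x y : Y), dist x y < δ k → dist (F x) (F y) ≤ 1 / ((k : ℝ) + 1)}
        = ⋂ (k : ℕ) (x : Y) (y : Y),
          {F : Y → Y | dist x y < δ k → dist (F x) (F y) ≤ 1 / ((k : ℝ) + 1)} := by
      ext F
      simp [Set.mem_iInter]
    rw [this]
    refine isClosed_iInter fun k => isClosed_iInter fun x => isClosed_iInter fun y => ?_
    by_cases hxy : dist x y < δ k
    · have : {F : Y → Y | dist x y < δ k → dist (F x) (F y) ≤ 1 / ((k : ℝ) + 1)}
          = {F : Y → Y | dist (F x) (F y) ≤ 1 / ((k : ℝ) + 1)} := by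
        ext F
        simp [hxy]
      rw [this]
      exact isClosed_le (Continuous.dist (continuous_apply x) (continuous_apply y))
        continuous_const
    · have : {F : Y → Y | dist x y < δ k → dist (F x) (F y) ≤ 1 / ((k : ℝ) + 1)}
          = Set.univ := Set.eq_univ_of_forall fun F hc => absurd hc hxy
      rw [this]
      exact isClosed_univ
  have hTcomp : IsCompact T := by
    apply ArzelaAscoli.isCompact_of_equicontinuous
    · have himg : ContinuousMap.toFun '' T = {F : Y → Y |
          ∀ (k : ℕ) (x y : Y), dist x y < δ k → dist (F x) (F y) ≤ 1 / ((k : ℝ) + 1)} := by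
        apply subset_antisymm
        · rintro F ⟨f, hf, rfl⟩
          exact hf
        · intro F hF
          have hcont : Continuous F := by
            rw [Metric.continuous_iff]
            intro b ε hε
            obtain ⟨k, hk⟩ := exists_nat_one_div_lt hε
            refine ⟨δ k, δpos k, fun a ha => ?_⟩
            calc dist (F a) (F b) ≤ 1 / ((k : ℝ) + 1) := hF k a b ha
              _ < ε := hk
          exact ⟨⟨F, hcont⟩, hF, rfl⟩
      rw [himg]
      exact hsetP.isCompact
    · intro x₀
      rw [Metric.equicontinuousAt_iff]
      intro ε hε
      obtain ⟨k, hk⟩ := exists_nat_one_div_lt hε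
      refine ⟨δ k, δpos k, fun x hx i => ?_⟩
      calc dist ((i : C(Y, Y)) x₀) ((i : C(Y, Y)) x) ≤ 1 / ((k : ℝ) + 1) :=
            i.2 k x₀ x (by rwa [dist_comm] at hx)
        _ < ε := hk
  have hsub : EE G Y ⊆ T := by
    apply closure_minimal _ hTcomp.isClosed
    rintro c ⟨g, rfl⟩
    intro k x y hxy
    exact le_of_lt (hδ k x y hxy g)
  exact hTcomp.of_isClosed_subset isClosed_closure hsub

lemma comp_mem_EE {a b : C(Y, Y)} (ha : a ∈ EE G Y) (hb : b ∈ EE G Y) :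
    a.comp b ∈ EE G Y := by
  have hc : Continuous fun p : C(Y, Y) × C(Y, Y) => p.1.comp p.2 :=
    ContinuousMap.continuous_comp'.comp continuous_swap
  have hmaps : Set.MapsTo (fun p : C(Y, Y) × C(Y, Y) => p.1.comp p.2)
      (Set.range (actCM G Y) ×ˢ Set.range (actCM G Y)) (Set.range (actCM G Y)) := by
    rintro ⟨-, -⟩ ⟨⟨g, rfl⟩, ⟨g', rfl⟩⟩
    exact ⟨g * g', actCM_mul (G := G) (Y := Y) g g'⟩
  have := (hmaps.closure hc) (x := (a, b)) (by rw [closure_prod_eq]; exact ⟨ha, hb⟩)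
  exact this

/-- Pairs of maps along with the maps for the inverse group elements. -/
def RR (G : Type*) [Group G] [TopologicalSpace G] (Y : Type*) [MetricSpace Y] [CompactSpace Y]
    [MulAction G Y] [ContinuousSMul G Y] : Set (C(Y, Y) × C(Y, Y)) :=
  closure (Set.range fun g : G => (actCM G Y g, actCM G Y g⁻¹))

lemma RR_subset : RR G Y ⊆ (EE G Y) ×ˢ (EE G Y) := by
  apply closure_minimal _ (isClosed_closure.prod isClosed_closure)
  rintro - ⟨g, rfl⟩
  exact ⟨mem_EE_self g, mem_EE_self g⁻¹⟩

lemma isCompact_RR (hY : EquicontinuousAction G Y) : IsCompact (RR G Y) :=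
  (((isCompact_EE hY).prod (isCompact_EE hY)).of_isClosed_subset isClosed_closure RR_subset)

lemma RR_comp_eq_id {p : C(Y, Y) × C(Y, Y)} (hp : p ∈ RR G Y) :
    p.1.comp p.2 = ContinuousMap.id Y ∧ p.2.comp p.1 = ContinuousMap.id Y := by
  have hc : Continuous fun q : C(Y, Y) × C(Y, Y) => (q.1.comp q.2, q.2.comp q.1) :=
    (ContinuousMap.continuous_comp'.comp continuous_swap).prodMk
      ContinuousMap.continuous_comp'
  have heq : Set.EqOn (fun q : C(Y, Y) × C(Y, Y) => (q.1.comp q.2, q.2.comp q.1))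
      (fun _ => (ContinuousMap.id Y, ContinuousMap.id Y))
      (Set.range fun g : G => (actCM G Y g, actCM G Y g⁻¹)) := by
    rintro - ⟨g, rfl⟩
    simp only
    rw [← actCM_mul, ← actCM_mul, mul_inv_cancel, inv_mul_cancel, actCM_one]
  have := heq.closure hc continuous_const hp
  exact ⟨congrArg Prod.fst this, congrArg Prod.snd this⟩

lemma comp_inverse_unique {a b b' : C(Y, Y)} (h1 : b.comp a = ContinuousMap.id Y)
    (h2 : a.comp b' = ContinuousMap.id Y) : b = b' := by
  have : (b.comp a).comp b' = b.comp (a.comp b') := (ContinuousMap.comp_assoc b a b')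
  rw [h1, h2] at this
  simpa using this.symm

lemma exists_inv_EE (hY : EquicontinuousAction G Y) {a : C(Y, Y)} (ha : a ∈ EE G Y) :
    ∃ b : C(Y, Y), b ∈ EE G Y ∧ a.comp b = ContinuousMap.id Y ∧
      b.comp a = ContinuousMap.id Y ∧ (a, b) ∈ RR G Y := by
  have h1 : EE G Y ⊆ Prod.fst '' RR G Y := by
    apply closure_minimal _ (((isCompact_RR hY).image continuous_fst).isClosed)
    rintro - ⟨g, rfl⟩
    exact ⟨(actCM G Y g, actCM G Y g⁻¹), subset_closure ⟨g, rfl⟩, rfl⟩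
  obtain ⟨p, hp, hfst⟩ := h1 ha
  obtain ⟨hpr1, hpr2⟩ := RR_comp_eq_id hp
  subst hfst
  exact ⟨p.2, (RR_subset hp).2, hpr1, hpr2, hp⟩

/-- The Ellis group as a type, carrying the equicontinuity hypothesis. -/
def EGrp (G : Type*) [Group G] [TopologicalSpace G] (Y : Type*) [MetricSpace Y] [CompactSpace Y]
    [MulAction G Y] [ContinuousSMul G Y] (_hY : EquicontinuousAction G Y) : Type _ :=
  {c : C(Y, Y) // c ∈ EE G Y}

variable {hY : EquicontinuousAction G Y}

/-- Constructor for elements of the Ellis group. -/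
def mkE (hY : EquicontinuousAction G Y) {c : C(Y, Y)} (h : c ∈ EE G Y) : EGrp G Y hY := ⟨c, h⟩

noncomputable instance : MetricSpace (EGrp G Y hY) :=
  inferInstanceAs (MetricSpace {c : C(Y, Y) // c ∈ EE G Y})

instance : CompactSpace (EGrp G Y hY) := isCompact_iff_compactSpace.mp (isCompact_EE hY)

lemma continuous_coeE : Continuous fun a : EGrp G Y hY => a.1 :=
  continuous_subtype_val

noncomputable instance : Group (EGrp G Y hY) where
  mul a b := ⟨a.1.comp b.1, comp_mem_EE a.2 b.2⟩
  one := ⟨ContinuousMap.id Y, id_mem_EE⟩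
  inv a := ⟨(exists_inv_EE hY a.2).choose, (exists_inv_EE hY a.2).choose_spec.1⟩
  mul_assoc a b c := Subtype.ext (ContinuousMap.comp_assoc a.1 b.1 c.1)
  one_mul a := Subtype.ext (ContinuousMap.id_comp a.1)
  mul_one a := Subtype.ext (ContinuousMap.comp_id a.1)
  inv_mul_cancel a := Subtype.ext (exists_inv_EE hY a.2).choose_spec.2.2.1

lemma coe_mul (a b : EGrp G Y hY) : (a * b).1 = a.1.comp b.1 := rfl

lemma coe_one : (1 : EGrp G Y hY).1 = ContinuousMap.id Y := rfl

lemma coe_mul_apply (a b : EGrp G Y hY) (y : Y) : (a * b).1 y = a.1 (b.1 y) := rfl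

lemma inv_pair_mem (a : EGrp G Y hY) : (a.1, (a⁻¹).1) ∈ RR G Y :=
  (exists_inv_EE hY a.2).choose_spec.2.2.2

lemma inv_apply_apply (a : EGrp G Y hY) (y : Y) : (a⁻¹).1 (a.1 y) = y := by
  have h := congrArg (fun z : EGrp G Y hY => z.1) (inv_mul_cancel a)
  exact DFunLike.congr_fun h y

lemma continuous_mulE : Continuous fun p : EGrp G Y hY × EGrp G Y hY => p.1 * p.2 := by
  apply Continuous.subtype_mk
  exact ContinuousMap.continuous_comp'.comp
    ((continuous_coeE.comp continuous_snd).prodMk (continuous_coeE.comp continuous_fst))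

lemma continuous_invE : Continuous fun a : EGrp G Y hY => a⁻¹ := by
  haveI : CompactSpace {p : C(Y, Y) × C(Y, Y) // p ∈ RR G Y} :=
    isCompact_iff_compactSpace.mp (isCompact_RR hY)
  let eqv : {p : C(Y, Y) × C(Y, Y) // p ∈ RR G Y} ≃ EGrp G Y hY :=
    { toFun := fun p => ⟨p.1.1, (RR_subset p.2).1⟩
      invFun := fun a => ⟨(a.1, (a⁻¹).1), inv_pair_mem a⟩
      left_inv := by
        rintro ⟨⟨a, b⟩, hp⟩
        have h1 := (exists_inv_EE hY (RR_subset hp).1).choose_spec.2.2.1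
        have h2 : ((mkE hY (RR_subset hp).1)⁻¹).1 = b :=
          comp_inverse_unique h1 (RR_comp_eq_id hp).1
        apply Subtype.ext
        show (a, ((mkE hY (RR_subset hp).1)⁻¹).1) = (a, b)
        rw [h2]
      right_inv := fun a => Subtype.ext rfl }
  have hc : Continuous eqv := by
    apply Continuous.subtype_mk
    exact continuous_fst.comp continuous_subtype_val
  let hom : {p : C(Y, Y) × C(Y, Y) // p ∈ RR G Y} ≃ₜ EGrp G Y hY :=
    hc.homeoOfEquivCompactToT2 (f := eqv)
  have hfun : (fun a : EGrp G Y hY => a⁻¹)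
      = fun a => ⟨((hom.symm a).1).2, (RR_subset (hom.symm a).2).2⟩ := by
    funext a
    have h1 : hom.symm a = eqv.symm a := rfl
    apply Subtype.ext
    rw [h1]
    rfl
  rw [hfun]
  apply Continuous.subtype_mk
  exact continuous_snd.comp (continuous_subtype_val.comp hom.symm.continuous)

instance : IsTopologicalGroup (EGrp G Y hY) where
  continuous_mul := continuous_mulE
  continuous_inv := continuous_invE

instance : Nonempty (EGrp G Y hY) := ⟨1⟩

noncomputable instance : MeasurableSpace (EGrp G Y hY) := borel _

instance : BorelSpace (EGrp G Y hY) := ⟨rfl⟩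

/-- Normalized Haar measure on the Ellis group. -/
noncomputable def haarE (hY : EquicontinuousAction G Y) : Measure (EGrp G Y hY) :=
  Measure.haarMeasure ⊤

instance : IsProbabilityMeasure (haarE (G := G) (Y := Y) hY) := by
  constructor
  rw [← PositiveCompacts.coe_top (α := EGrp G Y hY)]
  exact Measure.haarMeasure_self

instance : (haarE (G := G) (Y := Y) hY).IsMulLeftInvariant := by
  unfold haarE
  infer_instance

end TopoIsoAux
namespace TopoIsoAux

open MeasureTheory TopologicalSpace

set_option linter.unusedSectionVars false

variable {G : Type*} [Group G] [TopologicalSpace G] {Y : Type*} [MetricSpace Y] [CompactSpace Y]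
  [MulAction G Y] [ContinuousSMul G Y]

section Approx

/-- In an equicontinuous system, points of one orbit closure can be moved close to any
other point of the orbit closure. -/
lemma exists_smul_close (hY : EquicontinuousAction G Y) {p u v : Y}
    (hu : u ∈ closure (MulAction.orbit G p)) (hv : v ∈ closure (MulAction.orbit G p))
    {ε : ℝ} (hε : 0 < ε) : ∃ g : G, dist (g • u) v < ε := by
  obtain ⟨δ₁, hδ₁pos, hδ₁⟩ := hY (ε / 2) (half_pos hε)
  obtain ⟨b₁, hb₁mem, hub₁⟩ := Metric.mem_closure_iff.mp hu δ₁ hδ₁pos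
  obtain ⟨gu, rfl⟩ := hb₁mem
  obtain ⟨b₂, hb₂mem, hvb₂⟩ := Metric.mem_closure_iff.mp hv (ε / 2) (half_pos hε)
  obtain ⟨gv, rfl⟩ := hb₂mem
  refine ⟨gv * gu⁻¹, ?_⟩
  have h1 : dist ((gv * gu⁻¹) • u) ((gv * gu⁻¹) • (gu • p)) < ε / 2 :=
    hδ₁ u (gu • p) hub₁ (gv * gu⁻¹)
  have h2 : (gv * gu⁻¹) • (gu • p) = gv • p := by
    rw [smul_smul, inv_mul_cancel_right]
  calc dist ((gv * gu⁻¹) • u) v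
      ≤ dist ((gv * gu⁻¹) • u) ((gv * gu⁻¹) • (gu • p)) + dist ((gv * gu⁻¹) • (gu • p)) v :=
        dist_triangle _ _ _
    _ < ε / 2 + ε / 2 := by
        apply add_lt_add h1
        rw [h2, dist_comm]
        exact hvb₂
    _ = ε := add_halves ε

/-- Two-orbit version, crossing through a common point `y₀`. -/
lemma exists_smul_close₂ (hY : EquicontinuousAction G Y) {p q u v y₀ : Y}
    (hu : u ∈ closure (MulAction.orbit G p)) (hy₀p : y₀ ∈ closure (MulAction.orbit G p))
    (hy₀q : y₀ ∈ closure (MulAction.orbit G q)) (hv : v ∈ closure (MulAction.orbit G q))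
    {ε : ℝ} (hε : 0 < ε) : ∃ g : G, dist (g • u) v < ε := by
  obtain ⟨δ₂, hδ₂pos, hδ₂⟩ := hY (ε / 2) (half_pos hε)
  obtain ⟨g₁, hg₁⟩ := exists_smul_close hY hu hy₀p hδ₂pos
  obtain ⟨g₂, hg₂⟩ := exists_smul_close hY hy₀q hv (half_pos hε)
  refine ⟨g₂ * g₁, ?_⟩
  have h1 : dist ((g₂ * g₁) • u) (g₂ • y₀) < ε / 2 := by
    rw [mul_smul]
    exact hδ₂ (g₁ • u) y₀ hg₁ g₂
  calc dist ((g₂ * g₁) • u) v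
      ≤ dist ((g₂ * g₁) • u) (g₂ • y₀) + dist (g₂ • y₀) v := dist_triangle _ _ _
    _ < ε / 2 + ε / 2 := add_lt_add h1 hg₂
    _ = ε := add_halves ε

end Approx

section KeyLemma

variable [MeasurableSpace Y] [BorelSpace Y]

/-- Any continuous function is integrable against a finite measure on a compact space. -/
lemma cont_integrable {Z : Type*} [TopologicalSpace Z] [MeasurableSpace Z]
    [OpensMeasurableSpace Z] [CompactSpace Z] (lam : Measure Z) [IsFiniteMeasure lam]
    {φ : Z → ℝ} (hφ : Continuous φ) : Integrable φ lam :=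
  hφ.integrable_of_hasCompactSupport
    (IsCompact.of_isClosed_subset isCompact_univ (isClosed_tsupport φ) (Set.subset_univ _))

/-- Key lemma: integrals of continuous functions against two invariant probability measures
carried by orbit-connected sets agree. -/
lemma integral_eq_integral_of_invariant (hY : EquicontinuousAction G Y)
    (lam₁ lam₂ : Measure Y) [IsProbabilityMeasure lam₁] [IsProbabilityMeasure lam₂]
    (hinv₁ : ∀ g : G, Measure.map (fun y : Y => g • y) lam₁ = lam₁)
    (hinv₂ : ∀ g : G, Measure.map (fun y : Y => g • y) lam₂ = lam₂)
    (K₁ K₂ : Set Y) (hK₁m : MeasurableSet K₁) (hK₂m : MeasurableSet K₂)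
    (hK₁ : lam₁ K₁ = 1) (hK₂ : lam₂ K₂ = 1)
    (y₀ : Y) (hy₁ : y₀ ∈ K₁) (hy₂ : y₀ ∈ K₂)
    (happ : ∀ x ∈ K₁ ∪ K₂, ∀ ε : ℝ, 0 < ε → ∃ g : G, dist (g • x) y₀ < ε)
    (f : C(Y, ℝ)) : ∫ y, f y ∂lam₁ = ∫ y, f y ∂lam₂ := by
  classical
  set η : Measure (EGrp G Y hY) := haarE hY with hη
  set Λ : Y → ℝ := fun x => ∫ e : EGrp G Y hY, f ((e⁻¹).1 x) ∂η with hΛ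
  -- continuity of Λ
  have hΛcont : Continuous Λ := by
    apply continuous_of_dominated (bound := fun _ => ‖f‖)
    · intro x
      apply Continuous.aestronglyMeasurable
      exact f.continuous.comp ((continuous_eval_const x).comp
        (continuous_coeE.comp continuous_invE))
    · intro x
      exact Filter.Eventually.of_forall fun e => f.norm_coe_le_norm _
    · exact integrable_const _
    · exact Filter.Eventually.of_forall fun e =>
        f.continuous.comp (map_continuous (e⁻¹).1)
  -- invariance of Λ under the Ellis group
  have hΛinv : ∀ (e₀ : EGrp G Y hY) (x : Y), Λ (e₀.1 x) = Λ x := by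
    intro e₀ x
    have step : ∀ e : EGrp G Y hY, f (((e₀ * e)⁻¹).1 (e₀.1 x)) = f ((e⁻¹).1 x) := by
      intro e
      rw [mul_inv_rev, coe_mul_apply, inv_apply_apply]
    calc Λ (e₀.1 x) = ∫ e : EGrp G Y hY, f ((e⁻¹).1 (e₀.1 x)) ∂η := rfl
      _ = ∫ e : EGrp G Y hY, f (((e₀ * e)⁻¹).1 (e₀.1 x)) ∂η :=
          (integral_mul_left_eq_self (fun e : EGrp G Y hY => f ((e⁻¹).1 (e₀.1 x))) e₀).symm
      _ = ∫ e : EGrp G Y hY, f ((e⁻¹).1 x) ∂η := by simp only [step]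
      _ = Λ x := rfl
  -- the main computation for a single measure
  have helper : ∀ (lam : Measure Y), IsProbabilityMeasure lam →
      (∀ g : G, Measure.map (fun y : Y => g • y) lam = lam) →
      ∀ (K : Set Y), MeasurableSet K → lam K = 1 →
      (∀ x ∈ K, ∀ ε : ℝ, 0 < ε → ∃ g : G, dist (g • x) y₀ < ε) →
      ∫ y, f y ∂lam = Λ y₀ := by
    intro lam hprob hinv K hKm hK1 happx
    haveI := hprob
    -- invariance of lam under every element of the Ellis group
    have hEinv : ∀ c ∈ EE G Y, ∫ y, f (c y) ∂lam = ∫ y, f y ∂lam := by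
      have hΨcont : Continuous fun c : C(Y, Y) => ∫ y, f (c y) ∂lam := by
        apply continuous_of_dominated (bound := fun _ => ‖f‖)
        · intro c
          exact (f.continuous.comp (map_continuous c)).aestronglyMeasurable
        · intro c
          exact Filter.Eventually.of_forall fun y => f.norm_coe_le_norm _
        · exact integrable_const _
        · exact Filter.Eventually.of_forall fun y =>
            f.continuous.comp (continuous_eval_const y)
      have heqon : Set.EqOn (fun c : C(Y, Y) => ∫ y, f (c y) ∂lam)
          (fun _ => ∫ y, f y ∂lam) (Set.range (actCM G Y)) := by
        rintro - ⟨g, rfl⟩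
        have : ∫ y, f y ∂lam = ∫ y, f y ∂(Measure.map (fun y : Y => g • y) lam) := by
          rw [hinv g]
        rw [this, integral_map (continuous_const_smul g).measurable.aemeasurable
          f.continuous.aestronglyMeasurable]
        rfl
      exact fun c hc => (heqon.closure hΨcont continuous_const) hc
    -- Fubini
    have huncurry : Continuous (Function.uncurry
        fun (e : EGrp G Y hY) (x : Y) => f ((e⁻¹).1 x)) := by
      apply f.continuous.comp
      exact continuous_eval.comp
        (((continuous_coeE.comp continuous_invE).comp continuous_fst).prodMk continuous_snd)
    have hsupp : HasCompactSupport (Function.uncurry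
        fun (e : EGrp G Y hY) (x : Y) => f ((e⁻¹).1 x)) :=
      IsCompact.of_isClosed_subset isCompact_univ (isClosed_tsupport _) (Set.subset_univ _)
    have hswap := integral_integral_swap_of_hasCompactSupport huncurry hsupp
      (μ := η) (ν := lam)
    have hlhs : ∫ e : EGrp G Y hY, ∫ x, f ((e⁻¹).1 x) ∂lam ∂η = ∫ y, f y ∂lam := by
      have : ∀ e : EGrp G Y hY, ∫ x, f ((e⁻¹).1 x) ∂lam = ∫ y, f y ∂lam :=
        fun e => hEinv (e⁻¹).1 (e⁻¹).2
      simp only [this]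
      simp [measure_univ]
    have hΛint : ∫ x, Λ x ∂lam = ∫ y, f y ∂lam := by
      rw [← hlhs, hswap]
    -- Λ is constant (= Λ y₀) on K
    have hconst : ∀ x ∈ K, Λ x = Λ y₀ := by
      intro x hx
      refine eq_of_forall_dist_le fun ε hε => ?_
      obtain ⟨δ, hδpos, hδ⟩ := Metric.continuous_iff.mp hΛcont y₀ ε hε
      obtain ⟨g, hg⟩ := happx x hx δ hδpos
      have h1 : Λ (g • x) = Λ x := hΛinv (mkE hY (mem_EE_self g)) x
      rw [← h1]
      exact le_of_lt (hδ (g • x) hg)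
    have h0 : lam Kᶜ = 0 := by
      have hadd := measure_add_measure_compl (μ := lam) hKm
      rw [hK1, measure_univ] at hadd
      exact (ENNReal.add_right_inj ENNReal.one_ne_top).mp (hadd.trans (add_zero 1).symm)
    have hae : Λ =ᶠ[ae lam] fun _ => Λ y₀ :=
      Filter.eventuallyEq_of_mem (mem_ae_iff.mpr h0) hconst
    rw [← hΛint, integral_congr_ae hae, integral_const]
    simp [measure_univ]
  have h1 := helper lam₁ inferInstance hinv₁ K₁ hK₁m hK₁
    (fun x hx => happ x (Set.mem_union_left _ hx))
  have h2 := helper lam₂ inferInstance hinv₂ K₂ hK₂m hK₂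
    (fun x hx => happ x (Set.mem_union_right _ hx))
  rw [h1, h2]

/-- Two invariant probability measures carried by orbit-connected sets are equal. -/
lemma measure_eq_of_invariant (hY : EquicontinuousAction G Y)
    (lam₁ lam₂ : Measure Y) [IsProbabilityMeasure lam₁] [IsProbabilityMeasure lam₂]
    (hinv₁ : ∀ g : G, Measure.map (fun y : Y => g • y) lam₁ = lam₁)
    (hinv₂ : ∀ g : G, Measure.map (fun y : Y => g • y) lam₂ = lam₂)
    (K₁ K₂ : Set Y) (hK₁m : MeasurableSet K₁) (hK₂m : MeasurableSet K₂)
    (hK₁ : lam₁ K₁ = 1) (hK₂ : lam₂ K₂ = 1)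
    (y₀ : Y) (hy₁ : y₀ ∈ K₁) (hy₂ : y₀ ∈ K₂)
    (happ : ∀ x ∈ K₁ ∪ K₂, ∀ ε : ℝ, 0 < ε → ∃ g : G, dist (g • x) y₀ < ε) :
    lam₁ = lam₂ := by
  apply ext_of_forall_lintegral_eq_of_IsFiniteMeasure
  intro f
  have hfc : Continuous fun y : Y => ((f y : ℝ)) :=
    NNReal.continuous_coe.comp f.continuous
  have key := integral_eq_integral_of_invariant hY lam₁ lam₂ hinv₁ hinv₂ K₁ K₂ hK₁m hK₂m
    hK₁ hK₂ y₀ hy₁ hy₂ happ ⟨fun y => (f y : ℝ), hfc⟩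
  rw [lintegral_coe_eq_integral _ (cont_integrable lam₁ hfc),
    lintegral_coe_eq_integral _ (cont_integrable lam₂ hfc)]
  exact congrArg ENNReal.ofReal key

end KeyLemma

end TopoIsoAux
namespace TopoIsoAux

open MeasureTheory TopologicalSpace

set_option linter.unusedSectionVars false

/-- The complement of the support of a measure on a second countable space is null. -/
lemma measSupport_compl_null {Z : Type*} [TopologicalSpace Z] [SecondCountableTopology Z]
    [MeasurableSpace Z] (μ : Measure Z) : μ (measSupport μ)ᶜ = 0 := by
  classical
  set S : Set (Set Z) := {U : Set Z | IsOpen U ∧ μ U = 0} with hS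
  obtain ⟨T, hTc, hTS, hTU⟩ := isOpen_sUnion_countable S (fun s hs => hs.1)
  have hsub : (measSupport μ)ᶜ ⊆ ⋃₀ T := by
    intro x hx
    rw [hTU]
    simp only [measSupport, Set.mem_compl_iff, Set.mem_setOf_eq, not_forall] at hx
    obtain ⟨U, hUopen, hxU, hμU⟩ := hx
    exact ⟨U, ⟨hUopen, by simpa using hμU⟩, hxU⟩
  apply measure_mono_null hsub
  rw [Set.sUnion_eq_iUnion]
  haveI := hTc.to_subtype
  exact measure_iUnion_null fun U => (hTS U.2).2

variable {G : Type*} [Group G] [TopologicalSpace G]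

/-- The image of a transitive closed set under a factor map is the orbit closure of the
image of the transitive point. -/
lemma image_eq_orbit_closure {X Y : Type*} [MetricSpace X] [CompactSpace X] [MulAction G X]
    [MetricSpace Y] [CompactSpace Y] [MulAction G Y]
    {h : X → Y} (hc : Continuous h) (heq : ∀ (g : G) (x : X), h (g • x) = g • h x)
    {A : Set X} {x₀ : X} (hAcl : IsClosed A) (horb : closure (MulAction.orbit G x₀) = A) :
    h '' A = closure (MulAction.orbit G (h x₀)) := by
  have h1 : MulAction.orbit G (h x₀) = h '' MulAction.orbit G x₀ := by
    show (Set.range fun g : G => g • h x₀) = h '' Set.range fun g : G => g • x₀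
    rw [← Set.range_comp]
    exact congrArg Set.range <| funext fun g => (heq g x₀).symm
  apply subset_antisymm
  · calc h '' A = h '' closure (MulAction.orbit G x₀) := by rw [horb]
      _ ⊆ closure (h '' MulAction.orbit G x₀) := image_closure_subset_closure_image hc
      _ = closure (MulAction.orbit G (h x₀)) := by rw [h1]
  · apply closure_minimal
    · rw [h1]
      exact Set.image_mono (f := h) (horb ▸ subset_closure)
    · exact (hAcl.isCompact.image hc).isClosed

end TopoIsoAux
open scoped ENNReal

/-- For a topo-isomorphic extension of an equicontinuous system, the images
of the (transitive) supports of two distinct ergodic measures are disjoint. -/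
theorem image_supports_disjoint {G : Type*} [Group G] [TopologicalSpace G]
    [IsTopologicalGroup G] [LocallyCompactSpace G] [SigmaCompactSpace G] [MeasurableSpace G]
    [BorelSpace G] (m : Measure G) [m.IsHaarMeasure] (hG : AmenableGroup m)
    {X Y : Type*} [MetricSpace X] [CompactSpace X] [MulAction G X] [ContinuousSMul G X]
    [MeasurableSpace X] [BorelSpace X] [MetricSpace Y] [CompactSpace Y] [MulAction G Y]
    [ContinuousSMul G Y] [MeasurableSpace Y] [BorelSpace Y]
    (h : X → Y) (hY : EquicontinuousAction G Y) (hh : IsTopoIsomorphy G h)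
    (μ ν : Measure X) [IsProbabilityMeasure μ] [IsProbabilityMeasure ν]
    (hμ : IsErgodicMeasure G μ) (hν : IsErgodicMeasure G ν)
    (A B : Set X) (hA : IsTransitiveSet G A) (hB : IsTransitiveSet G B)
    (hμA : measSupport μ = A) (hνB : measSupport ν = B) (hne : μ ≠ ν) :
    Disjoint (h '' A) (h '' B) := by
  classical
  by_contra hdis
  obtain ⟨y₀, hy₀A, hy₀B⟩ := Set.not_disjoint_iff.mp hdis
  obtain ⟨⟨hcont, hsurj, hequiv⟩, hiso⟩ := hh
  have hhm : Measurable h := hcont.measurable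
  obtain ⟨hAne, hAcl, hAinv, x₀, hx₀A, hx₀orb⟩ := hA
  obtain ⟨hBne, hBcl, hBinv, x₁, hx₁B, hx₁orb⟩ := hB
  -- the supports have full measure
  have hμA1 : μ A = 1 := by
    have h0 : μ Aᶜ = 0 := by
      rw [← hμA]; exact TopoIsoAux.measSupport_compl_null μ
    have hadd := measure_add_measure_compl (μ := μ) hAcl.measurableSet
    rw [h0, measure_univ, add_zero] at hadd
    exact hadd
  have hνB1 : ν B = 1 := by
    have h0 : ν Bᶜ = 0 := by
      rw [← hνB]; exact TopoIsoAux.measSupport_compl_null ν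
    have hadd := measure_add_measure_compl (μ := ν) hBcl.measurableSet
    rw [h0, measure_univ, add_zero] at hadd
    exact hadd
  -- image sets are orbit closures
  have hKA : h '' A = closure (MulAction.orbit G (h x₀)) :=
    TopoIsoAux.image_eq_orbit_closure hcont hequiv hAcl hx₀orb
  have hKB : h '' B = closure (MulAction.orbit G (h x₁)) :=
    TopoIsoAux.image_eq_orbit_closure hcont hequiv hBcl hx₁orb
  have hKAm : MeasurableSet (h '' A) := (hAcl.isCompact.image hcont).isClosed.measurableSet
  have hKBm : MeasurableSet (h '' B) := (hBcl.isCompact.image hcont).isClosed.measurableSet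
  -- push the measures down
  have hlam₁prob : IsProbabilityMeasure (Measure.map h μ) :=
    Measure.isProbabilityMeasure_map hhm.aemeasurable
  have hlam₂prob : IsProbabilityMeasure (Measure.map h ν) :=
    Measure.isProbabilityMeasure_map hhm.aemeasurable
  haveI := hlam₁prob; haveI := hlam₂prob
  have hlam₁A : Measure.map h μ (h '' A) = 1 := by
    rw [Measure.map_apply hhm hKAm]
    refine le_antisymm prob_le_one ?_
    calc (1 : ℝ≥0∞) = μ A := hμA1.symm
      _ ≤ μ (h ⁻¹' (h '' A)) := measure_mono (Set.subset_preimage_image h A)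
  have hlam₂B : Measure.map h ν (h '' B) = 1 := by
    rw [Measure.map_apply hhm hKBm]
    refine le_antisymm prob_le_one ?_
    calc (1 : ℝ≥0∞) = ν B := hνB1.symm
      _ ≤ ν (h ⁻¹' (h '' B)) := measure_mono (Set.subset_preimage_image h B)
  have hinv₁ : ∀ g : G, Measure.map (fun y : Y => g • y) (Measure.map h μ) =
      Measure.map h μ := by
    intro g
    rw [Measure.map_map (continuous_const_smul g).measurable hhm]
    have hfe : (fun y : Y => g • y) ∘ h = h ∘ (fun x : X => g • x) :=
      funext fun x => (hequiv g x).symm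
    rw [hfe, ← Measure.map_map hhm (continuous_const_smul g).measurable, (hμ.1 g).map_eq]
  have hinv₂ : ∀ g : G, Measure.map (fun y : Y => g • y) (Measure.map h ν) =
      Measure.map h ν := by
    intro g
    rw [Measure.map_map (continuous_const_smul g).measurable hhm]
    have hfe : (fun y : Y => g • y) ∘ h = h ∘ (fun x : X => g • x) :=
      funext fun x => (hequiv g x).symm
    rw [hfe, ← Measure.map_map hhm (continuous_const_smul g).measurable, (hν.1 g).map_eq]
  -- approximate transitivity towards y₀
  have happ : ∀ x ∈ (h '' A) ∪ (h '' B), ∀ ε : ℝ, 0 < ε → ∃ g : G, dist (g • x) y₀ < ε := by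
    intro x hx ε hε
    have hy₀p : y₀ ∈ closure (MulAction.orbit G (h x₀)) := hKA ▸ hy₀A
    have hy₀q : y₀ ∈ closure (MulAction.orbit G (h x₁)) := hKB ▸ hy₀B
    rcases hx with hx | hx
    · exact TopoIsoAux.exists_smul_close hY (hKA ▸ hx) hy₀p hε
    · exact TopoIsoAux.exists_smul_close hY (hKB ▸ hx) hy₀q hε
  -- the pushed-down measures coincide
  have hlameq : Measure.map h μ = Measure.map h ν :=
    TopoIsoAux.measure_eq_of_invariant hY (Measure.map h μ) (Measure.map h ν) hinv₁ hinv₂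
      (h '' A) (h '' B) hKAm hKBm hlam₁A hlam₂B y₀ hy₀A hy₀B happ
  -- consider the average measure and use the isomorphism mod 0
  set ρ : Measure X := (2⁻¹ : ℝ≥0∞) • μ + (2⁻¹ : ℝ≥0∞) • ν with hρdef
  have hρprob : IsProbabilityMeasure ρ := by
    constructor
    rw [hρdef]
    simp [measure_univ, ENNReal.inv_two_add_inv_two]
  have hρinv : IsInvariantMeasure G ρ := by
    intro g
    refine ⟨(continuous_const_smul g).measurable, ?_⟩
    rw [hρdef, Measure.map_add _ _ (continuous_const_smul g).measurable, Measure.map_smul,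
      Measure.map_smul, (hμ.1 g).map_eq, (hν.1 g).map_eq]
  obtain ⟨hhm', hmapρ, M, N, gmap, hMm, hNm, hρM, hνN, hgm, hbij, hgh, hhg⟩ :=
    hiso ρ hρprob hρinv
  have hρMc : ρ Mᶜ = 0 := by
    haveI := hρprob
    have hcompl := measure_compl hMm (measure_ne_top ρ M)
    rw [hρM, measure_univ] at hcompl
    simpa using hcompl
  have hmix : (2⁻¹ : ℝ≥0∞) * μ Mᶜ + (2⁻¹ : ℝ≥0∞) * ν Mᶜ = 0 := by
    rw [← smul_eq_mul, ← smul_eq_mul, ← Measure.smul_apply, ← Measure.smul_apply,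
      ← Measure.add_apply]
    exact hρMc
  have hhalf : (2⁻¹ : ℝ≥0∞) ≠ 0 := by simp
  obtain ⟨h1, h2⟩ := add_eq_zero.mp hmix
  have hμMc : μ Mᶜ = 0 := by
    rcases mul_eq_zero.mp h1 with hbad | hok
    · exact absurd hbad hhalf
    · exact hok
  have hνMc : ν Mᶜ = 0 := by
    rcases mul_eq_zero.mp h2 with hbad | hok
    · exact absurd hbad hhalf
    · exact hok
  have haeμ : (gmap ∘ h) =ᶠ[ae μ] id := by
    rw [Filter.EventuallyEq, ae_iff]
    refine measure_mono_null (fun x hx => ?_) hμMc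
    intro hxM
    exact hx (hgh x hxM)
  have haeν : (gmap ∘ h) =ᶠ[ae ν] id := by
    rw [Filter.EventuallyEq, ae_iff]
    refine measure_mono_null (fun x hx => ?_) hνMc
    intro hxM
    exact hx (hgh x hxM)
  have hμeq : Measure.map gmap (Measure.map h μ) = μ := by
    rw [Measure.map_map hgm hhm, Measure.map_congr haeμ, Measure.map_id]
  have hνeq : Measure.map gmap (Measure.map h ν) = ν := by
    rw [Measure.map_map hgm hhm, Measure.map_congr haeν, Measure.map_id]
  exact hne (by rw [← hμeq, hlameq, hνeq])
end

section
/- Let (X,G) be an irregular extension of (Y,G) via a factor map h : X → Y, i.e., there is a G-invariant measure μ on X with h(μ)({y : #h⁻¹(y) > 1}) > 0. If h(μ)-almost all fibers h⁻¹(y) are finite, then h is not a topo-isomorphy: there exists a G-invariant measure on X for which h fails to be an isomorphism mod 0 onto its push-forward. -/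
open MeasureTheory Filter Topology Pointwise
open scoped ENNReal NNReal

private lemma count_le_iff_exists_inj {X : Type*} [MeasurableSpace X]
    [MeasurableSingletonClass X] (k : ℕ) (s : Set X) :
    (k : ℝ≥0∞) ≤ Measure.count s ↔
      ∃ x : Fin k → X, (∀ i, x i ∈ s) ∧ Function.Injective x := by
  induction k generalizing s with
  | zero =>
    simp only [Nat.cast_zero, zero_le, true_iff]
    exact ⟨Fin.elim0, fun i => i.elim0, fun i => i.elim0⟩
  | succ k ih =>
    constructor
    · intro hk
      have hs : s.Nonempty := by
        by_contra hemp
        rw [Set.not_nonempty_iff_eq_empty] at hemp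
        rw [hemp, measure_empty] at hk
        simp at hk
      obtain ⟨a, ha⟩ := hs
      have h1 : (k : ℝ≥0∞) ≤ Measure.count (s \ {a}) := by
        have hsub : Measure.count s ≤ Measure.count (s \ {a}) + Measure.count {a} := by
          refine le_trans (measure_mono ?_) (measure_union_le _ _)
          intro x hx
          by_cases hxa : x = a
          · exact Or.inr (by simp [hxa])
          · exact Or.inl ⟨hx, hxa⟩
        rw [Measure.count_singleton] at hsub
        have h2 := le_trans hk hsub
        rw [Nat.cast_succ] at h2
        exact (ENNReal.add_le_add_iff_right ENNReal.one_ne_top).mp h2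
      obtain ⟨x, hx, hinj⟩ := (ih _).mp h1
      refine ⟨Fin.cons a x, ?_, ?_⟩
      · intro i
        rcases Fin.eq_zero_or_eq_succ i with rfl | ⟨i', rfl⟩
        · simpa using ha
        · simpa using (hx i').1
      · intro i j hij
        rcases Fin.eq_zero_or_eq_succ i with rfl | ⟨i', rfl⟩ <;>
          rcases Fin.eq_zero_or_eq_succ j with rfl | ⟨j', rfl⟩
        · rfl
        · simp only [Fin.cons_zero, Fin.cons_succ] at hij
          exact absurd hij.symm (hx j').2
        · simp only [Fin.cons_zero, Fin.cons_succ] at hij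
          exact absurd hij (hx i').2
        · simp only [Fin.cons_succ] at hij
          exact congrArg Fin.succ (hinj hij)
    · rintro ⟨x, hx, hinj⟩
      have htail : (k : ℝ≥0∞) ≤ Measure.count (Set.range fun i : Fin k => x i.succ) := by
        refine (ih _).mpr ⟨fun i => x i.succ, fun i => Set.mem_range_self i, ?_⟩
        intro i j hij
        exact Fin.succ_injective _ (hinj hij)
      have hdisj : Disjoint (Set.range fun i : Fin k => x i.succ) ({x 0} : Set X) := by
        rw [Set.disjoint_singleton_right]
        rintro ⟨i, hi⟩
        exact (Fin.succ_ne_zero i) (hinj hi)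
      have hsubset : (Set.range fun i : Fin k => x i.succ) ∪ {x 0} ⊆ s := by
        rintro z (⟨i, rfl⟩ | hz)
        · exact hx _
        · simpa using hz ▸ hx 0
      calc ((k+1 : ℕ) : ℝ≥0∞) = (k : ℝ≥0∞) + 1 := by push_cast; ring
        _ ≤ Measure.count (Set.range fun i : Fin k => x i.succ) + Measure.count {x 0} := by
            rw [Measure.count_singleton]; exact add_le_add_left htail 1
        _ = Measure.count ((Set.range fun i : Fin k => x i.succ) ∪ {x 0}) := by
            rw [measure_union hdisj (measurableSet_singleton _)]
        _ ≤ Measure.count s := measure_mono hsubset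

private lemma isClosed_sep_set {X Y : Type*} [MetricSpace X] [CompactSpace X] [MetricSpace Y]
    {h : X → Y} (hc : Continuous h) {K : Set X} (hK : IsClosed K) (k : ℕ) (ε : ℝ) :
    IsClosed {y : Y | ∃ x : Fin (k + 1) → X, (∀ i, x i ∈ K ∧ h (x i) = y) ∧
      ∀ i j, i ≠ j → ε ≤ dist (x i) (x j)} := by
  set T : Set (Fin (k+1) → X) :=
    {x | (∀ i, x i ∈ K) ∧ (∀ i, h (x i) = h (x 0)) ∧
      ∀ i j, i ≠ j → ε ≤ dist (x i) (x j)} with hT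
  have h1 : IsClosed {x : Fin (k+1) → X | ∀ i, x i ∈ K} := by
    have : {x : Fin (k+1) → X | ∀ i, x i ∈ K} = ⋂ i, (fun x : Fin (k+1) → X => x i) ⁻¹' K := by
      ext x; simp
    rw [this]
    exact isClosed_iInter fun i => hK.preimage (continuous_apply i)
  have h2 : IsClosed {x : Fin (k+1) → X | ∀ i, h (x i) = h (x 0)} := by
    have : {x : Fin (k+1) → X | ∀ i, h (x i) = h (x 0)} =
        ⋂ i, {x : Fin (k+1) → X | h (x i) = h (x 0)} := by ext x; simp
    rw [this]
    exact isClosed_iInter fun i =>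
      isClosed_eq (hc.comp (continuous_apply i)) (hc.comp (continuous_apply 0))
  have h3 : IsClosed {x : Fin (k+1) → X | ∀ i j, i ≠ j → ε ≤ dist (x i) (x j)} := by
    have : {x : Fin (k+1) → X | ∀ i j, i ≠ j → ε ≤ dist (x i) (x j)} =
        ⋂ i, ⋂ j, {x : Fin (k+1) → X | i ≠ j → ε ≤ dist (x i) (x j)} := by ext x; simp
    rw [this]
    refine isClosed_iInter fun i => isClosed_iInter fun j => ?_
    by_cases hij : i = j
    · simp [hij]
    · have : {x : Fin (k+1) → X | i ≠ j → ε ≤ dist (x i) (x j)}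
          = {x : Fin (k+1) → X | ε ≤ dist (x i) (x j)} := by
        ext x; simp [hij]
      rw [this]
      exact isClosed_le continuous_const ((continuous_apply i).dist (continuous_apply j))
  have hTclosed : IsClosed T := by
    have hTeq : T = {x : Fin (k+1) → X | ∀ i, x i ∈ K} ∩
        ({x : Fin (k+1) → X | ∀ i, h (x i) = h (x 0)} ∩
          {x : Fin (k+1) → X | ∀ i j, i ≠ j → ε ≤ dist (x i) (x j)}) := by
      ext x
      simp only [hT, Set.mem_setOf_eq, Set.mem_inter_iff]
    rw [hTeq]
    exact h1.inter (h2.inter h3)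
  have hTcomp : IsCompact T := hTclosed.isCompact
  have himg : IsCompact ((fun x : Fin (k+1) → X => h (x 0)) '' T) :=
    hTcomp.image (hc.comp (continuous_apply 0))
  have heq : {y : Y | ∃ x : Fin (k + 1) → X, (∀ i, x i ∈ K ∧ h (x i) = y) ∧
      ∀ i j, i ≠ j → ε ≤ dist (x i) (x j)} = (fun x : Fin (k+1) → X => h (x 0)) '' T := by
    ext y
    constructor
    · rintro ⟨x, hx, hsep⟩
      exact ⟨x, ⟨fun i => (hx i).1, fun i => (hx i).2.trans (hx 0).2.symm, hsep⟩, (hx 0).2⟩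
    · rintro ⟨x, ⟨hxK, hxfib, hsep⟩, rfl⟩
      exact ⟨x, fun i => ⟨hxK i, hxfib i⟩, hsep⟩
  rw [heq]
  exact himg.isClosed

private lemma measurable_count_closed {X Y : Type*} [MetricSpace X] [CompactSpace X]
    [MeasurableSpace X] [BorelSpace X] [MetricSpace Y] [MeasurableSpace Y] [BorelSpace Y]
    {h : X → Y} (hc : Continuous h) {K : Set X} (hK : IsClosed K) :
    Measurable fun y => Measure.count (h ⁻¹' {y} ∩ K) := by
  set c : Y → ℝ≥0∞ := fun y => Measure.count (h ⁻¹' {y} ∩ K) with hcdef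
  have hlevel : ∀ k : ℕ, MeasurableSet {y | ((k+1 : ℕ) : ℝ≥0∞) ≤ c y} := by
    intro k
    have heq : {y | ((k+1 : ℕ) : ℝ≥0∞) ≤ c y} =
        ⋃ m : ℕ, {y : Y | ∃ x : Fin (k + 1) → X, (∀ i, x i ∈ K ∧ h (x i) = y) ∧
          ∀ i j, i ≠ j → 1/(m+1 : ℝ) ≤ dist (x i) (x j)} := by
      ext y
      constructor
      · intro hy
        obtain ⟨x, hx, hinj⟩ := (count_le_iff_exists_inj (k+1) _).mp hy
        have hx' : ∀ i, x i ∈ K ∧ h (x i) = y := by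
          intro i
          have h12 := hx i
          rw [Set.mem_inter_iff, Set.mem_preimage, Set.mem_singleton_iff] at h12
          exact ⟨h12.2, h12.1⟩
        have hsep : ∃ δ > 0, ∀ i j : Fin (k+1), i ≠ j → δ ≤ dist (x i) (x j) := by
          classical
          set P : Finset (Fin (k+1) × Fin (k+1)) :=
            Finset.univ.filter (fun p => p.1 ≠ p.2) with hP
          by_cases hPne : P.Nonempty
          · refine ⟨P.inf' hPne (fun p => dist (x p.1) (x p.2)), ?_, ?_⟩
            · rw [gt_iff_lt, Finset.lt_inf'_iff]
              rintro ⟨i, j⟩ hij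
              rw [hP, Finset.mem_filter] at hij
              exact dist_pos.mpr fun hxe => hij.2 (hinj hxe)
            · intro i j hij
              have hmem : ((i, j) : Fin (k+1) × Fin (k+1)) ∈ P := by
                rw [hP, Finset.mem_filter]
                exact ⟨Finset.mem_univ _, hij⟩
              exact Finset.inf'_le (f := fun p : Fin (k+1) × Fin (k+1) => dist (x p.1) (x p.2)) hmem
          · refine ⟨1, one_pos, fun i j hij => ?_⟩
            have hmem : ((i, j) : Fin (k+1) × Fin (k+1)) ∈ P := by
              rw [hP, Finset.mem_filter]
              exact ⟨Finset.mem_univ _, hij⟩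
            exact absurd ⟨(i, j), hmem⟩ hPne
        obtain ⟨δ, hδ, hsep'⟩ := hsep
        obtain ⟨m, hm⟩ := exists_nat_one_div_lt hδ
        exact Set.mem_iUnion.mpr ⟨m, x, hx', fun i j hij =>
          le_trans (le_of_lt hm) (hsep' i j hij)⟩
      · intro hy
        obtain ⟨m, x, hx, hsep⟩ := Set.mem_iUnion.mp hy
        refine (count_le_iff_exists_inj (k+1) _).mpr ⟨x, fun i => ?_, ?_⟩
        · exact Set.mem_inter (by simp [(hx i).2]) (hx i).1
        · intro i j hij
          by_contra hne
          have hd := hsep i j hne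
          rw [hij, dist_self] at hd
          have hpos : (0:ℝ) < 1/(m+1 : ℝ) := by positivity
          linarith
    rw [heq]
    exact MeasurableSet.iUnion fun m => (isClosed_sep_set hc hK k (1/(m+1:ℝ))).measurableSet
  have hrep : c = fun y => ⨆ k : ℕ,
      Set.indicator {y' | ((k+1 : ℕ) : ℝ≥0∞) ≤ c y'} (fun _ => ((k+1 : ℕ) : ℝ≥0∞)) y := by
    funext y
    rcases Set.finite_or_infinite (h ⁻¹' {y} ∩ K) with hfin | hinf
    · obtain ⟨n, hcy⟩ : ∃ n : ℕ, c y = (n : ℝ≥0∞) :=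
        ⟨_, Measure.count_apply_finite _ hfin⟩
      rw [hcy]
      refine le_antisymm ?_ (iSup_le fun j => ?_)
      · cases n with
        | zero => exact le_trans (le_of_eq (by norm_num)) (zero_le)
        | succ m =>
          refine le_iSup_of_le m ?_
          rw [Set.indicator_of_mem (show y ∈ {y' | ((m+1 : ℕ) : ℝ≥0∞) ≤ c y'} by
            rw [Set.mem_setOf_eq, hcy])]
      · by_cases hj : y ∈ {y' | ((j+1 : ℕ) : ℝ≥0∞) ≤ c y'}
        · rw [Set.indicator_of_mem hj]
          have hj' := hj
          rw [Set.mem_setOf_eq, hcy] at hj'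
          exact hj'
        · rw [Set.indicator_of_notMem hj]
          exact zero_le
    · have hcy : c y = ∞ := Measure.count_apply_infinite hinf
      rw [hcy]
      refine (top_le_iff.mp ?_).symm
      have hle : (⨆ n : ℕ, (n : ℝ≥0∞)) ≤ ⨆ k : ℕ,
          Set.indicator {y' | ((k+1 : ℕ) : ℝ≥0∞) ≤ c y'} (fun _ => ((k+1 : ℕ) : ℝ≥0∞)) y := by
        refine iSup_le fun n => le_iSup_of_le n ?_
        rw [Set.indicator_of_mem (show y ∈ {y' | ((n+1 : ℕ) : ℝ≥0∞) ≤ c y'} by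
          rw [Set.mem_setOf_eq, hcy]; exact le_top)]
        exact Nat.cast_le.mpr (Nat.le_succ n)
      rw [ENNReal.iSup_natCast] at hle
      exact hle
  rw [hrep]
  exact Measurable.iSup fun k => measurable_const.indicator (hlevel k)

private lemma measurable_indicator_count {X Y : Type*} [MetricSpace X] [CompactSpace X]
    [MeasurableSpace X] [BorelSpace X] [MetricSpace Y] [MeasurableSpace Y] [BorelSpace Y]
    {h : X → Y} (hc : Continuous h) {B : Set X} (hB : MeasurableSet B) :
    Measurable (Set.indicator {y' : Y | Measure.count (h ⁻¹' {y'}) ≠ ∞}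
      (fun y' => Measure.count (h ⁻¹' {y'} ∩ B))) := by
  set Y₀ : Set Y := {y' : Y | Measure.count (h ⁻¹' {y'}) ≠ ∞} with hY₀
  have hcu : Measurable fun y : Y => Measure.count (h ⁻¹' {y}) := by
    have := measurable_count_closed hc isClosed_univ
    simpa using this
  have hY₀m : MeasurableSet Y₀ := by
    have : Y₀ = (fun y : Y => Measure.count (h ⁻¹' {y})) ⁻¹' {∞}ᶜ := by
      ext y; simp [hY₀]
    rw [this]
    exact hcu (measurableSet_singleton _).compl
  have hfibm : ∀ y : Y, MeasurableSet (h ⁻¹' {y}) :=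
    fun y => hc.measurable (measurableSet_singleton y)
  revert hB
  apply MeasurableSpace.induction_on_inter (C := fun B _ =>
      Measurable (Set.indicator Y₀ (fun y' => Measure.count (h ⁻¹' {y'} ∩ B))))
    (s := {s : Set X | IsClosed s})
    (BorelSpace.measurable_eq.trans borel_eq_generateFrom_isClosed)
    (fun s hs t ht _ => hs.inter ht)
  · simpa using (measurable_const (a := (0:ℝ≥0∞)))
  · intro t ht
    exact (measurable_count_closed hc ht).indicator hY₀m
  · intro t htm hC
    have hkey : Set.indicator Y₀ (fun y' => Measure.count (h ⁻¹' {y'} ∩ tᶜ)) =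
        fun y => Set.indicator Y₀ (fun y' => Measure.count (h ⁻¹' {y'})) y -
          Set.indicator Y₀ (fun y' => Measure.count (h ⁻¹' {y'} ∩ t)) y := by
      funext y
      by_cases hy : y ∈ Y₀
      · rw [Set.indicator_of_mem hy, Set.indicator_of_mem hy, Set.indicator_of_mem hy]
        have hadd : Measure.count (h ⁻¹' {y} ∩ t) + Measure.count (h ⁻¹' {y} ∩ tᶜ) =
            Measure.count (h ⁻¹' {y}) := by
          rw [← measure_union (Disjoint.mono Set.inter_subset_right Set.inter_subset_right
            disjoint_compl_right) ((hfibm y).inter htm.compl)]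
          rw [Set.inter_union_compl]
        have hne : Measure.count (h ⁻¹' {y} ∩ t) ≠ ∞ := by
          refine ne_top_of_le_ne_top hy (measure_mono Set.inter_subset_left)
        rw [← hadd, add_comm, ENNReal.add_sub_cancel_right hne]
      · rw [Set.indicator_of_notMem hy, Set.indicator_of_notMem hy,
          Set.indicator_of_notMem hy]
        simp
    rw [hkey]
    exact (hcu.indicator hY₀m).sub hC
  · intro f hdisj hfm hCf
    have hkey : Set.indicator Y₀ (fun y' => Measure.count (h ⁻¹' {y'} ∩ ⋃ i, f i)) =
        fun y => ∑' i, Set.indicator Y₀ (fun y' => Measure.count (h ⁻¹' {y'} ∩ f i)) y := by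
      funext y
      by_cases hy : y ∈ Y₀
      · rw [Set.indicator_of_mem hy]
        have : h ⁻¹' {y} ∩ ⋃ i, f i = ⋃ i, h ⁻¹' {y} ∩ f i := by
          rw [Set.inter_iUnion]
        rw [this, measure_iUnion ?_ (fun i => (hfibm y).inter (hfm i))]
        · congr 1
          funext i
          rw [Set.indicator_of_mem hy]
        · intro i j hij
          exact Disjoint.mono Set.inter_subset_right Set.inter_subset_right (hdisj hij)
      · rw [Set.indicator_of_notMem hy]
        simp only [Set.indicator_of_notMem hy, tsum_zero]
    rw [hkey]
    exact Measurable.ennreal_tsum fun i => hCf i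

/-- An irregular extension with almost surely finite fibers is not a
topo-isomorphy. -/
theorem not_topoIsomorphy_of_irregular_finite_fibers {G : Type*} [Group G]
    [TopologicalSpace G] [IsTopologicalGroup G] [LocallyCompactSpace G] [SigmaCompactSpace G]
    {X Y : Type*} [MetricSpace X] [CompactSpace X] [MulAction G X] [ContinuousSMul G X]
    [MeasurableSpace X] [BorelSpace X] [MetricSpace Y] [CompactSpace Y] [MulAction G Y]
    [ContinuousSMul G Y] [MeasurableSpace Y] [BorelSpace Y]
    (h : X → Y) (hfac : IsFactorMap G h)
    (μ : Measure X) [IsProbabilityMeasure μ] (hinv : IsInvariantMeasure G μ)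
    (hirr : 0 < Measure.map h μ {y : Y | ¬ (h ⁻¹' {y}).Subsingleton})
    (hfin : ∀ᵐ y ∂(Measure.map h μ), (h ⁻¹' {y}).Finite) :
    ¬ IsTopoIsomorphy G h := by
  obtain ⟨hcont, hsurj, hequiv⟩ := hfac
  intro htop
  obtain ⟨_, hiso⟩ := htop
  have hhm : Measurable h := hcont.measurable
  set ν : Measure Y := Measure.map h μ with hν
  haveI : IsProbabilityMeasure ν := Measure.isProbabilityMeasure_map hhm.aemeasurable
  set Y₀ : Set Y := {y' : Y | Measure.count (h ⁻¹' {y'}) ≠ ∞} with hY₀def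
  have hcu : Measurable fun y : Y => Measure.count (h ⁻¹' {y}) := by
    have := measurable_count_closed hcont isClosed_univ
    simpa using this
  have hY₀m : MeasurableSet Y₀ := by
    have heq : Y₀ = (fun y : Y => Measure.count (h ⁻¹' {y})) ⁻¹' {∞}ᶜ := by
      ext y; simp [hY₀def]
    rw [heq]
    exact hcu (measurableSet_singleton _).compl
  have hfibm : ∀ y : Y, MeasurableSet (h ⁻¹' {y}) :=
    fun y => hhm (measurableSet_singleton y)
  have hfib_one : ∀ y : Y, (1:ℝ≥0∞) ≤ Measure.count (h ⁻¹' {y}) := by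
    intro y
    obtain ⟨x, hx⟩ := hsurj y
    calc (1:ℝ≥0∞) = Measure.count ({x} : Set X) := (Measure.count_singleton x).symm
      _ ≤ Measure.count (h ⁻¹' {y}) := measure_mono (Set.singleton_subset_iff.mpr (by simp [hx]))
  have hfibne : ∀ y : Y, Measure.count (h ⁻¹' {y}) ≠ 0 :=
    fun y => (lt_of_lt_of_le zero_lt_one (hfib_one y)).ne'
  -- the fiberwise-uniform density
  set d : Set X → Y → ℝ≥0∞ := fun B y =>
    Set.indicator Y₀ (fun y' => Measure.count (h ⁻¹' {y'} ∩ B)) y *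
      (Measure.count (h ⁻¹' {y}))⁻¹ with hddef
  have hdm : ∀ {B : Set X}, MeasurableSet B → Measurable (d B) := by
    intro B hB
    exact (measurable_indicator_count hcont hB).mul hcu.inv
  have hdunion : ∀ (f : ℕ → Set X), (∀ i, MeasurableSet (f i)) →
      Pairwise (Function.onFun Disjoint f) → ∀ y, d (⋃ i, f i) y = ∑' i, d (f i) y := by
    intro f hfm hdisj y
    rw [hddef]
    simp only
    by_cases hy : y ∈ Y₀
    · rw [Set.indicator_of_mem hy]
      have heq : h ⁻¹' {y} ∩ ⋃ i, f i = ⋃ i, h ⁻¹' {y} ∩ f i := Set.inter_iUnion _ _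
      rw [heq, measure_iUnion ?_ (fun i => (hfibm y).inter (hfm i))]
      · rw [ENNReal.tsum_mul_right]
        congr 1
        exact tsum_congr fun i =>
          (Set.indicator_of_mem hy (fun y' => Measure.count (h ⁻¹' {y'} ∩ f i))).symm
      · intro i j hij
        exact Disjoint.mono Set.inter_subset_right Set.inter_subset_right (hdisj hij)
    · simp only [Set.indicator_of_notMem hy, zero_mul, tsum_zero]
  -- the measure μ' : fiberwise uniform relative of ν
  set μ' : Measure X := Measure.ofMeasurable (fun B _ => ∫⁻ y, d B y ∂ν)
    (by simp [hddef]) (by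
      intro f hfm hdisj
      have heq : ∀ y, d (⋃ i, f i) y = ∑' i, d (f i) y := hdunion f hfm hdisj
      simp_rw [heq]
      exact lintegral_tsum fun i => (hdm (hfm i)).aemeasurable) with hμ'def
  have hμ'app : ∀ {B : Set X}, MeasurableSet B → μ' B = ∫⁻ y, d B y ∂ν := by
    intro B hB
    exact Measure.ofMeasurable_apply B hB
  -- ν Y₀ = 1
  have hY0c : ν Y₀ᶜ = 0 := by
    have h1 : ν {y | ¬ (h ⁻¹' {y}).Finite} = 0 := ae_iff.mp hfin
    refine measure_mono_null ?_ h1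
    intro y hy
    simp only [hY₀def, Set.mem_compl_iff, Set.mem_setOf_eq, not_not] at hy
    exact Measure.count_apply_eq_top.mp hy
  have hY0 : ν Y₀ = 1 := by
    have h2 := measure_add_measure_compl (μ := ν) hY₀m
    rw [hY0c, add_zero, measure_univ] at h2
    exact h2
  -- μ' is a probability measure
  have hduniv : ∀ y, d Set.univ y = Set.indicator Y₀ (fun _ => 1) y := by
    intro y
    rw [hddef]
    simp only
    by_cases hy : y ∈ Y₀
    · rw [Set.indicator_of_mem hy, Set.indicator_of_mem hy, Set.inter_univ]
      exact ENNReal.mul_inv_cancel (hfibne y) hy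
    · rw [Set.indicator_of_notMem hy, Set.indicator_of_notMem hy, zero_mul]
  have hμ'univ : μ' Set.univ = 1 := by
    rw [hμ'app MeasurableSet.univ]
    simp_rw [hduniv]
    rw [lintegral_indicator hY₀m]
    simp [hY0]
  have hμ'prob : IsProbabilityMeasure μ' := ⟨hμ'univ⟩
  -- equivariance of the fiber counts
  have hcount_smul : ∀ (g : G) (B : Set X) (y : Y),
      Measure.count (h ⁻¹' {y} ∩ (fun x : X => g • x) ⁻¹' B) =
        Measure.count (h ⁻¹' {g • y} ∩ B) := by
    intro g B y
    have himage : (fun x : X => g • x) '' (h ⁻¹' {y} ∩ (fun x : X => g • x) ⁻¹' B) =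
        h ⁻¹' {g • y} ∩ B := by
      rw [Set.image_inter_preimage]
      congr 1
      ext z
      simp only [Set.mem_image, Set.mem_preimage, Set.mem_singleton_iff]
      constructor
      · rintro ⟨x, hx, rfl⟩
        rw [hequiv g x, hx]
      · intro hz
        refine ⟨g⁻¹ • z, ?_, by simp⟩
        rw [hequiv g⁻¹ z, hz]
        simp
    rw [← himage, Measure.count_injective_image (MulAction.injective g)]
  have hfibcount_smul : ∀ (g : G) (y : Y),
      Measure.count (h ⁻¹' {g • y}) = Measure.count (h ⁻¹' {y}) := by
    intro g y
    have := hcount_smul g Set.univ y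
    simpa using this.symm
  have hψpres : ∀ g : G, MeasurePreserving (fun y : Y => g • y) ν ν := by
    intro g
    have hψm : Measurable fun y : Y => g • y := (continuous_const_smul g).measurable
    refine ⟨hψm, ?_⟩
    rw [hν, Measure.map_map hψm hhm]
    have hco : (fun y : Y => g • y) ∘ h = h ∘ (fun x : X => g • x) := by
      funext x
      exact (hequiv g x).symm
    rw [hco, ← Measure.map_map hhm (continuous_const_smul g).measurable, (hinv g).map_eq]
  have hd_smul : ∀ (g : G) (B : Set X) (y : Y),
      d ((fun x : X => g • x) ⁻¹' B) y = d B (g • y) := by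
    intro g B y
    rw [hddef]
    simp only
    rw [hfibcount_smul g y]
    congr 1
    by_cases hy : y ∈ Y₀
    · have hy' : g • y ∈ Y₀ := by
        simp only [hY₀def, Set.mem_setOf_eq] at hy ⊢
        rw [hfibcount_smul g y]
        exact hy
      rw [Set.indicator_of_mem hy, Set.indicator_of_mem hy']
      exact hcount_smul g B y
    · have hy' : g • y ∉ Y₀ := by
        simp only [hY₀def, Set.mem_setOf_eq] at hy ⊢
        rw [hfibcount_smul g y]
        exact hy
      rw [Set.indicator_of_notMem hy, Set.indicator_of_notMem hy']
  have hinv' : IsInvariantMeasure G μ' := by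
    intro g
    have hφm : Measurable fun x : X => g • x := (continuous_const_smul g).measurable
    refine ⟨hφm, ?_⟩
    refine Measure.ext fun B hB => ?_
    rw [Measure.map_apply hφm hB, hμ'app (hφm hB), hμ'app hB]
    have heq : ∀ y, d ((fun x : X => g • x) ⁻¹' B) y = d B (g • y) := hd_smul g B
    simp_rw [heq]
    exact (hψpres g).lintegral_comp (hdm hB)
  -- apply the topo-isomorphy hypothesis to μ'
  obtain ⟨-, -, M, N, ginv, hMm, hNm, hμ'M, hνN, hgm, hbij, hgl, hgr⟩ :=
    hiso μ' hμ'prob hinv'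
  -- the set of nontrivial (finite) fibers has positive ν-measure
  set S : Set Y := Y₀ ∩ {y | (2:ℝ≥0∞) ≤ Measure.count (h ⁻¹' {y})} with hSdef
  have hSm : MeasurableSet S := hY₀m.inter (hcu measurableSet_Ici)
  have hνS : 0 < ν S := by
    have hsub : {y : Y | ¬ (h ⁻¹' {y}).Subsingleton} ⊆ S ∪ Y₀ᶜ := by
      intro y hy
      rw [Set.mem_setOf_eq, Set.not_subsingleton_iff] at hy
      obtain ⟨a, ha, b, hb, hab⟩ := hy
      have h2 : (2:ℝ≥0∞) ≤ Measure.count (h ⁻¹' {y}) := by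
        have hpair : Measure.count ({a, b} : Set X) = 2 := by
          rw [Set.insert_eq, measure_union (Set.disjoint_singleton_left.mpr (by simp [hab]))
            (measurableSet_singleton _), Measure.count_singleton, Measure.count_singleton]
          norm_num
        calc (2:ℝ≥0∞) = Measure.count ({a, b} : Set X) := hpair.symm
          _ ≤ Measure.count (h ⁻¹' {y}) := by
              refine measure_mono ?_
              intro z hz
              rcases hz with rfl | hz
              · exact ha
              · rw [Set.mem_singleton_iff] at hz
                rw [hz]
                exact hb
      by_cases hyY : y ∈ Y₀
      · exact Or.inl ⟨hyY, h2⟩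
      · exact Or.inr hyY
    calc (0:ℝ≥0∞) < ν {y | ¬ (h ⁻¹' {y}).Subsingleton} := hirr
      _ ≤ ν (S ∪ Y₀ᶜ) := measure_mono hsub
      _ ≤ ν S + ν Y₀ᶜ := measure_union_le _ _
      _ = ν S := by rw [hY0c, add_zero]
  -- h is injective on M, so each fiber carries at most one point of M
  have hinjM : Set.InjOn h M := hbij.injOn
  have hcM : ∀ y, Measure.count (h ⁻¹' {y} ∩ M) ≤ 1 := by
    intro y
    have hss : (h ⁻¹' {y} ∩ M).Subsingleton := by
      intro a ha b hb
      exact hinjM ha.2 hb.2 ((show h a = y from ha.1).trans (show h b = y from hb.1).symm)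
    rcases hss.eq_empty_or_singleton with he | ⟨a, he⟩
    · rw [he]
      simp
    · rw [he, Measure.count_singleton]
  -- pointwise bound
  have hbound : ∀ y, d M y + Set.indicator S (fun _ => (2:ℝ≥0∞)⁻¹) y ≤ 1 := by
    intro y
    by_cases hyS : y ∈ S
    · rw [Set.indicator_of_mem hyS]
      have hy0 : y ∈ Y₀ := hyS.1
      have hdM : d M y ≤ 2⁻¹ := by
        rw [hddef]
        simp only
        rw [Set.indicator_of_mem hy0]
        calc Measure.count (h ⁻¹' {y} ∩ M) * (Measure.count (h ⁻¹' {y}))⁻¹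
            ≤ 1 * (2:ℝ≥0∞)⁻¹ := mul_le_mul' (hcM y) (ENNReal.inv_le_inv' hyS.2)
          _ = 2⁻¹ := one_mul _
      calc d M y + 2⁻¹ ≤ 2⁻¹ + 2⁻¹ := add_le_add_left hdM _
        _ = 1 := ENNReal.inv_two_add_inv_two
    · rw [Set.indicator_of_notMem hyS, add_zero]
      rw [hddef]
      simp only
      by_cases hy0 : y ∈ Y₀
      · rw [Set.indicator_of_mem hy0]
        calc Measure.count (h ⁻¹' {y} ∩ M) * (Measure.count (h ⁻¹' {y}))⁻¹
            ≤ 1 * 1 := mul_le_mul' (hcM y) (ENNReal.inv_le_one.mpr (hfib_one y))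
          _ = 1 := one_mul _
      · rw [Set.indicator_of_notMem hy0, zero_mul]
        exact zero_le
  -- conclude
  have hfinal : (1:ℝ≥0∞) + 2⁻¹ * ν S ≤ 1 + 0 := by
    have h1 : ∫⁻ y, Set.indicator S (fun _ => (2:ℝ≥0∞)⁻¹) y ∂ν = 2⁻¹ * ν S := by
      rw [lintegral_indicator hSm, setLIntegral_const]
    have hcalc : μ' M + 2⁻¹ * ν S ≤ 1 := by
      calc μ' M + 2⁻¹ * ν S
          = ∫⁻ y, d M y ∂ν + ∫⁻ y, Set.indicator S (fun _ => (2:ℝ≥0∞)⁻¹) y ∂ν := by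
            rw [hμ'app hMm, h1]
        _ = ∫⁻ y, (d M y + Set.indicator S (fun _ => (2:ℝ≥0∞)⁻¹) y) ∂ν :=
            (lintegral_add_left (hdm hMm) _).symm
        _ ≤ ∫⁻ _, 1 ∂ν := lintegral_mono hbound
        _ = 1 := by simp
    rw [hμ'M] at hcalc
    simpa using hcalc
  have hle := (ENNReal.add_le_add_iff_left ENNReal.one_ne_top).mp hfinal
  have hS0 : ν S = 0 := by
    rcases mul_eq_zero.mp (le_antisymm hle (zero_le)) with hc | hc
    · exact absurd hc (by simp)
    · exact hc
  exact absurd hS0 hνS.ne'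
end
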